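/- arXiv:1506.00671 — 6 statements merged into one kernel-verified Lean document; each statement's English description precedes it below -/
import Mathlib

section
/- Let f be a probability density function on an interval I, let μ be a finite Borel measure on I, let 𝒥 = {J_1, …, J_ℓ} be a collection of ℓ pairwise disjoint bounded subintervals of I of positive length, and let h* : I → ℝ be a function that is constant on each J_i. Define the flattening h̄ of μ over 𝒥 by h̄(x) := μ(J_i)/|J_i| for x ∈ J_i, where |J_i| is the length of J_i. Then Σ_{i=1}^ℓ ∫_{J_i} |h̄ − h*| ≤ Σ_{i=1}^ℓ ∫_{J_i} |f − h*| + ‖μ − f‖_{A_ℓ,𝒥}. -/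
open MeasureTheory Set

/-- The `A_k`-distance between a finite Borel measure `μ` and an integrable function `g` on a
finite family `𝒥` of pairwise disjoint intervals: the supremum over all collections of `k`
pairwise disjoint intervals, each contained in some member of `𝒥`, of
`∑ᵢ |μ(Iᵢ) − ∫_{Iᵢ} g|`. -/
noncomputable def akDistFam (k : ℕ) {ℓ : ℕ} (𝒥 : Fin ℓ → Set ℝ) (g : ℝ → ℝ)
    (μ : Measure ℝ) : ℝ :=
  sSup { s : ℝ | ∃ I : Fin k → Set ℝ,
    (∀ i, (I i).OrdConnected ∧ ∃ j, I i ⊆ 𝒥 j) ∧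
    (Pairwise fun i j => Disjoint (I i) (I j)) ∧
    s = ∑ i, |(μ (I i)).toReal - ∫ x in I i, g x| }

/-- `f` is a probability density function on `I`. -/
def IsPDFOn (f : ℝ → ℝ) (I : Set ℝ) : Prop :=
  (∀ x ∈ I, 0 ≤ f x) ∧ IntegrableOn f I ∧ (∫ x in I, f x) = 1

/-- Let `f` be a pdf on an interval `I`, `μ` a finite Borel measure on `I`,
`𝒥 = (J₁, …, J_ℓ)` a collection of `ℓ` pairwise disjoint bounded subintervals of `I` of
positive length, and `h⋆ : I → ℝ` a function constant on each `Jᵢ`. Define the flattening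
`h̄` of `μ` over `𝒥` by `h̄(x) := μ(Jᵢ)/|Jᵢ|` for `x ∈ Jᵢ`. Then
`∑ᵢ ∫_{Jᵢ} |h̄ − h⋆| ≤ ∑ᵢ ∫_{Jᵢ} |f − h⋆| + ‖μ − f‖_{A_ℓ,𝒥}`. -/
theorem stmt4 (I : Set ℝ) (hI : I.OrdConnected) (f : ℝ → ℝ) (hf : IsPDFOn f I)
    (μ : Measure ℝ) [IsFiniteMeasure μ]
    (ℓ : ℕ) (J : Fin ℓ → Set ℝ)
    (hJ : ∀ i, (J i).OrdConnected ∧ J i ⊆ I ∧ Bornology.IsBounded (J i) ∧ 0 < volume (J i))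
    (hdisj : Pairwise fun i j => Disjoint (J i) (J j))
    (hstar hbar : ℝ → ℝ)
    (hconst : ∀ i, ∃ cst : ℝ, ∀ x ∈ J i, hstar x = cst)
    (hflat : ∀ i, ∀ x ∈ J i, hbar x = (μ (J i)).toReal / (volume (J i)).toReal) :
    ∑ i, ∫ x in J i, |hbar x - hstar x| ≤
      (∑ i, ∫ x in J i, |f x - hstar x|) + akDistFam ℓ J f μ := by
  classical
  choose d hd using hconst
  have hmeasJ : ∀ i, MeasurableSet (J i) := fun i => (hJ i).1.measurableSet
  have hvol_ne_top : ∀ i, volume (J i) ≠ ⊤ := fun i => ((hJ i).2.2.1.measure_lt_top).ne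
  set v : Fin ℓ → ℝ := fun i => (volume (J i)).toReal with hv
  have hvpos : ∀ i, 0 < v i := fun i => ENNReal.toReal_pos (hJ i).2.2.2.ne' (hvol_ne_top i)
  have hfint : ∀ i, IntegrableOn f (J i) := fun i => hf.2.1.mono_set (hJ i).2.1
  -- Step A : compute the LHS integrals
  have hA : ∀ i, ∫ x in J i, |hbar x - hstar x| = |(μ (J i)).toReal - d i * v i| := by
    intro i
    have hcongr : EqOn (fun x => |hbar x - hstar x|)
        (fun _ => |(μ (J i)).toReal / v i - d i|) (J i) := by
      intro x hx
      simp only [hflat i x hx, hd i x hx]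
      rfl
    rw [setIntegral_congr_fun (hmeasJ i) hcongr, setIntegral_const, smul_eq_mul]
    have hdiff : (μ (J i)).toReal / v i - d i = ((μ (J i)).toReal - d i * v i) / v i := by
      have hv0 : v i ≠ 0 := (hvpos i).ne'
      field_simp
    rw [hdiff, abs_div, abs_of_pos (hvpos i), mul_comm, measureReal_def, div_mul_cancel₀ _ (hvpos i).ne']
  -- Step B : compare with the f-integral
  have hB : ∀ i, |(∫ x in J i, f x) - d i * v i| ≤ ∫ x in J i, |f x - hstar x| := by
    intro i
    have h1 : ∫ x in J i, |f x - hstar x| = ∫ x in J i, |f x - d i| :=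
      setIntegral_congr_fun (hmeasJ i) fun x hx => by simp only [hd i x hx]
    have h2 : (∫ x in J i, f x) - d i * v i = ∫ x in J i, (f x - d i) := by
      rw [integral_sub (hfint i)
        (integrableOn_const (hJ i).2.2.1.measure_lt_top.ne),
        setIntegral_const, measureReal_def, smul_eq_mul, mul_comm]
    rw [h1, h2]
    calc |∫ x in J i, (f x - d i)| ≤ ∫ x in J i, |f x - d i| := by
          simpa using norm_integral_le_integral_norm (μ := volume.restrict (J i))
            (fun x => f x - d i)
      _ = ∫ x in J i, |f x - d i| := rfl
  -- Step C : the sum of discrepancies is at most the A_ℓ distance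
  have hC : ∑ i, |(μ (J i)).toReal - ∫ x in J i, f x| ≤ akDistFam ℓ J f μ := by
    apply le_csSup
    · refine ⟨(μ univ).toReal + ∫ x in I, |f x|, ?_⟩
      rintro s ⟨K, hK, hKd, rfl⟩
      have hKm : ∀ i, MeasurableSet (K i) := fun i => (hK i).1.measurableSet
      have hKI : ∀ i, K i ⊆ I := by
        intro i
        obtain ⟨j, hj⟩ := (hK i).2
        exact hj.trans (hJ j).2.1
      have hUI : (⋃ i, K i) ⊆ I := iUnion_subset hKI
      have hint : IntegrableOn (fun x => |f x|) I := hf.2.1.abs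
      have h1 : ∑ i, (μ (K i)).toReal ≤ (μ univ).toReal := by
        have hm := measure_iUnion (μ := μ) hKd hKm
        calc ∑ i, (μ (K i)).toReal = (μ (⋃ i, K i)).toReal := by
              rw [hm, tsum_fintype, ENNReal.toReal_sum fun i _ => measure_ne_top μ _]
          _ ≤ (μ univ).toReal :=
              ENNReal.toReal_mono (measure_ne_top μ _) (measure_mono (subset_univ _))
      have h2 : ∑ i, ∫ x in K i, |f x| ≤ ∫ x in I, |f x| := by
        rw [← tsum_fintype (L := SummationFilter.unconditional _), ← integral_iUnion hKm hKd (hint.mono_set hUI)]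
        exact setIntegral_mono_set hint
          (Filter.Eventually.of_forall fun x => abs_nonneg _)
          (HasSubset.Subset.eventuallyLE hUI)
      calc ∑ i, |(μ (K i)).toReal - ∫ x in K i, f x|
          ≤ ∑ i, ((μ (K i)).toReal + ∫ x in K i, |f x|) := by
            refine Finset.sum_le_sum fun i _ => ?_
            refine (abs_sub _ _).trans ?_
            rw [abs_of_nonneg ENNReal.toReal_nonneg]
            gcongr
            simpa using norm_integral_le_integral_norm (μ := volume.restrict (K i)) f
        _ = (∑ i, (μ (K i)).toReal) + ∑ i, ∫ x in K i, |f x| := Finset.sum_add_distrib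
        _ ≤ (μ univ).toReal + ∫ x in I, |f x| := add_le_add h1 h2
    · exact ⟨J, fun i => ⟨(hJ i).1, i, subset_rfl⟩, hdisj, rfl⟩
  -- Combine
  calc ∑ i, ∫ x in J i, |hbar x - hstar x|
      = ∑ i, |(μ (J i)).toReal - d i * v i| := Finset.sum_congr rfl fun i _ => hA i
    _ ≤ ∑ i, (|(∫ x in J i, f x) - d i * v i| + |(μ (J i)).toReal - ∫ x in J i, f x|) := by
        refine Finset.sum_le_sum fun i _ => ?_
        calc |(μ (J i)).toReal - d i * v i|
            ≤ |(μ (J i)).toReal - ∫ x in J i, f x| + |(∫ x in J i, f x) - d i * v i| :=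
              abs_sub_le _ _ _
          _ = _ := add_comm _ _
    _ = (∑ i, |(∫ x in J i, f x) - d i * v i|) +
          ∑ i, |(μ (J i)).toReal - ∫ x in J i, f x| := Finset.sum_add_distrib
    _ ≤ (∑ i, ∫ x in J i, |f x - hstar x|) + akDistFam ℓ J f μ :=
        add_le_add (Finset.sum_le_sum fun i _ => hB i) hC
end

section
/- Let p(x) = Σ_{j=0}^d c_j x^j be a real polynomial of degree at most d such that |p(x)| ≤ 1 for all x ∈ [−1,1]. Then |c_j| ≤ (√2 + 1)^d for all j = 0, …, d. -/
open Polynomial Finset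

private lemma auxQ_eval (d : ℕ) (P : Polynomial ℂ) (hP : P.natDegree ≤ d) (w : ℂ) (hw : w ≠ 0) :
    (∑ j ∈ Finset.range (d+1), C (P.coeff j * (2:ℂ)⁻¹ ^ j) * (X^2+1)^j * X^(d-j)).eval w
      = w ^ d * P.eval ((w^2+1)/(2*w)) := by
  rw [Polynomial.eval_finset_sum,
    Polynomial.eval_eq_sum_range' (Nat.lt_succ_of_le hP), Finset.mul_sum]
  refine Finset.sum_congr rfl fun j hj => ?_
  have hj' : j ≤ d := Nat.lt_succ_iff.mp (Finset.mem_range.mp hj)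
  have h1 : w ^ (d - j) = w ^ d / w ^ j := pow_sub₀ w hw hj'
  simp only [eval_mul, eval_pow, eval_add, eval_C, eval_X, eval_one]
  rw [h1, div_pow, mul_pow]
  field_simp
  have h2 : ((1:ℂ)/2)^j * 2^j = 1 := by rw [← mul_pow]; norm_num
  linear_combination (P.coeff j * (1+w^2)^j) * h2

private lemma auxCircle (d : ℕ) (p : Polynomial ℝ) (hdeg : p.natDegree ≤ d)
    (hbound : ∀ x ∈ Set.Icc (-1 : ℝ) 1, |p.eval x| ≤ 1) (z : ℂ) (hz : ‖z‖ = 1) :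
    ‖(p.map (algebraMap ℝ ℂ)).eval z‖ ≤ (Real.sqrt 2 + 1) ^ d := by
  set P : Polynomial ℂ := p.map (algebraMap ℝ ℂ) with hPdef
  have hP : P.natDegree ≤ d := (natDegree_map_le).trans hdeg
  set Q : Polynomial ℂ := ∑ j ∈ Finset.range (d+1),
      C (P.coeff j * (2:ℂ)⁻¹ ^ j) * (X^2+1)^j * X^(d-j) with hQdef
  have hPreal : ∀ x : ℝ, P.eval (x : ℂ) = ((p.eval x : ℝ) : ℂ) := by
    intro x
    have h : P.eval (algebraMap ℝ ℂ x) = algebraMap ℝ ℂ (p.eval x) := by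
      rw [hPdef, Polynomial.eval_map, Polynomial.eval₂_at_apply]
    simpa using h
  -- bound of Q on the closed unit ball
  have hQball : ∀ w : ℂ, ‖w‖ ≤ 1 → ‖Q.eval w‖ ≤ 1 := by
    intro w hw
    have hdiff : DiffContOnCl ℂ (fun w => Q.eval w) (Metric.ball (0:ℂ) 1) :=
      (Q.differentiable).diffContOnCl
    refine Complex.norm_le_of_forall_mem_frontier_norm_le Metric.isBounded_ball hdiff
      (fun v hv => ?_) ?_
    · rw [frontier_ball (0:ℂ) one_ne_zero, Metric.mem_sphere, dist_zero_right] at hv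
      have hv0 : v ≠ 0 := fun h => by simp [h] at hv
      have hvconj : v * (starRingEnd ℂ) v = 1 := by
        rw [Complex.mul_conj]; norm_cast; rw [Complex.normSq_eq_norm_sq, hv]; norm_num
      have h1 : v^2 + 1 = v * (v + (starRingEnd ℂ) v) := by linear_combination -hvconj
      have hzval : (v ^ 2 + 1) / (2 * v) = ((v.re : ℝ) : ℂ) := by
        rw [h1, Complex.add_conj]; push_cast; field_simp
      rw [auxQ_eval d P hP v hv0, hzval, hPreal]
      have habs : |v.re| ≤ 1 := by
        rw [← hv]; exact Complex.abs_re_le_norm v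
      have hre : v.re ∈ Set.Icc (-1:ℝ) 1 := abs_le.mp habs
      calc ‖v ^ d * ((p.eval v.re : ℝ) : ℂ)‖ = ‖v‖^d * |p.eval v.re| := by
            rw [norm_mul, norm_pow, Complex.norm_real, Real.norm_eq_abs]
        _ ≤ 1 := by rw [hv, one_pow, one_mul]; exact hbound _ hre
    · rw [closure_ball (0:ℂ) one_ne_zero]
      simpa [Metric.mem_closedBall, dist_zero_right] using hw
  -- choose the small root w of w^2 - 2zw + 1
  obtain ⟨s, hs⟩ : ∃ s : ℂ, s ^ 2 = z ^ 2 - 1 :=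
    ⟨(z^2-1) ^ ((2:ℕ):ℂ)⁻¹, by exact_mod_cast Complex.cpow_nat_inv_pow _ (by norm_num)⟩
  obtain ⟨w, w', hmul, hsum, hle⟩ : ∃ w w' : ℂ, w * w' = 1 ∧ w + w' = 2 * z ∧ ‖w‖ ≤ ‖w'‖ := by
    rcases le_total ‖z + s‖ ‖z - s‖ with h | h
    · exact ⟨z + s, z - s, by ring_nf; linear_combination -hs, by ring, h⟩
    · exact ⟨z - s, z + s, by ring_nf; linear_combination -hs, by ring, h⟩
  have hw0 : w ≠ 0 := by rintro rfl; simp at hmul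
  have hwpos : 0 < ‖w‖ := norm_pos_iff.mpr hw0
  have hwmul : ‖w‖ * ‖w'‖ = 1 := by rw [← norm_mul, hmul, norm_one]
  have hw1 : ‖w‖ ≤ 1 := by
    nlinarith [mul_le_mul_of_nonneg_left hle (norm_nonneg w), hwmul, hwpos]
  have hw'le : ‖w'‖ ≤ 2 + ‖w‖ := by
    have hww : w' = 2 * z - w := by linear_combination hsum
    calc ‖w'‖ = ‖2 * z - w‖ := by rw [hww]
      _ ≤ ‖2 * z‖ + ‖w‖ := norm_sub_le _ _
      _ = 2 + ‖w‖ := by rw [norm_mul, hz]; norm_num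
  have hs2 : Real.sqrt 2 ^ 2 = 2 := Real.sq_sqrt (by norm_num)
  have hslb : Real.sqrt 2 - 1 ≤ ‖w‖ := by
    have hkey : 1 ≤ ‖w‖ * (2 + ‖w‖) := by
      calc (1:ℝ) = ‖w‖ * ‖w'‖ := hwmul.symm
        _ ≤ ‖w‖ * (2 + ‖w‖) := mul_le_mul_of_nonneg_left hw'le (norm_nonneg w)
    nlinarith [hkey, hs2, Real.sqrt_nonneg 2, hwpos]
  have hzw : (w^2+1)/(2*w) = z := by
    have h : w^2 + 1 = 2*z*w := by linear_combination -hmul + w * hsum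
    rw [h]; field_simp
  have hkey : ‖Q.eval w‖ = ‖w‖^d * ‖P.eval z‖ := by
    rw [auxQ_eval d P hP w hw0, hzw, norm_mul, norm_pow]
  have hQw := hQball w hw1
  rw [hkey] at hQw
  have hsp : 0 < Real.sqrt 2 - 1 := by nlinarith [Real.sqrt_nonneg 2]
  have h1 : (Real.sqrt 2 - 1)^d * ‖P.eval z‖ ≤ 1 :=
    le_trans (mul_le_mul_of_nonneg_right (pow_le_pow_left₀ hsp.le hslb d) (norm_nonneg _)) hQw
  have h2 : (Real.sqrt 2 - 1)^d * (Real.sqrt 2 + 1)^d = 1 := by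
    rw [← mul_pow]; rw [show (Real.sqrt 2 - 1) * (Real.sqrt 2 + 1) = 1 by nlinarith]; rw [one_pow]
  have hq : (0:ℝ) < (Real.sqrt 2 + 1)^d := pow_pos (by positivity) d
  calc ‖P.eval z‖ = (Real.sqrt 2 - 1)^d * ‖P.eval z‖ * (Real.sqrt 2 + 1)^d := by
        rw [mul_comm ((Real.sqrt 2 - 1)^d) _, mul_assoc, h2, mul_one]
    _ ≤ 1 * (Real.sqrt 2 + 1)^d := mul_le_mul_of_nonneg_right h1 hq.le
    _ = _ := one_mul _

private lemma auxDFT (d : ℕ) (P : Polynomial ℂ) (hP : P.natDegree ≤ d) (j : ℕ) (hj : j ≤ d)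
    (B : ℝ) (hB : ∀ z : ℂ, ‖z‖ = 1 → ‖P.eval z‖ ≤ B) : ‖P.coeff j‖ ≤ B := by
  set N := d + 1 with hN
  set ω : ℂ := Complex.exp (2 * Real.pi * Complex.I / N) with hω
  have hprim : IsPrimitiveRoot ω N := Complex.isPrimitiveRoot_exp N (by omega)
  have hωN : ω ^ N = 1 := hprim.pow_eq_one
  have hωnorm : ‖ω‖ = 1 := by
    have harg : (2 * Real.pi * Complex.I / (N:ℂ)) = ((2 * Real.pi / N : ℝ) : ℂ) * Complex.I := by
      push_cast; ring
    rw [hω, harg, Complex.norm_exp_ofReal_mul_I]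
  have hω0 : ω ≠ 0 := fun h => by simp [h] at hωnorm
  -- DFT identity
  have hDFT : (N : ℂ) * P.coeff j = ∑ k ∈ Finset.range N, P.eval (ω ^ k) * (ω⁻¹) ^ (j * k) := by
    have heval : ∀ k, P.eval (ω ^ k) = ∑ m ∈ Finset.range N, P.coeff m * (ω ^ k) ^ m := fun k =>
      Polynomial.eval_eq_sum_range' (Nat.lt_succ_of_le hP) _
    calc (N : ℂ) * P.coeff j
        = ∑ m ∈ Finset.range N, P.coeff m *
            (∑ k ∈ Finset.range N, (ω ^ m * (ω⁻¹) ^ j) ^ k) := by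
          rw [Finset.sum_eq_single j ?_ ?_]
          · rw [← mul_pow, mul_inv_cancel₀ hω0, one_pow]
            simp [mul_comm]
          · intro m hm hmj
            have hm' : m < N := Finset.mem_range.mp hm
            have hj' : j < N := by omega
            have hη : (ω ^ m * (ω⁻¹) ^ j) ^ N = 1 := by
              rw [mul_pow, ← pow_mul, ← pow_mul, mul_comm m N, mul_comm j N, pow_mul, pow_mul,
                inv_pow, hωN, inv_one, one_pow, one_pow, one_mul]
            have hη1 : ω ^ m * (ω⁻¹) ^ j ≠ 1 := by
              intro h
              apply hmj
              refine hprim.pow_inj hm' hj' ?_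
              have : ω ^ m * (ω⁻¹) ^ j * ω ^ j = 1 * ω ^ j := by rw [h]
              rwa [mul_assoc, inv_pow, inv_mul_cancel₀ (pow_ne_zero j hω0), mul_one,
                one_mul] at this
            rw [geom_sum_eq hη1, hη]
            simp
          · intro h; exact absurd (Finset.mem_range.mpr (by omega)) h
      _ = ∑ m ∈ Finset.range N, ∑ k ∈ Finset.range N,
            P.coeff m * ((ω ^ k) ^ m * (ω⁻¹) ^ (j * k)) := by
          refine Finset.sum_congr rfl fun m _ => ?_
          rw [Finset.mul_sum]
          refine Finset.sum_congr rfl fun k _ => ?_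
          rw [mul_pow, ← pow_mul, ← pow_mul, ← pow_mul, mul_comm m k, mul_comm j k]
      _ = ∑ k ∈ Finset.range N, P.eval (ω ^ k) * (ω⁻¹) ^ (j * k) := by
          rw [Finset.sum_comm]
          refine Finset.sum_congr rfl fun k _ => ?_
          rw [heval, Finset.sum_mul]
          refine Finset.sum_congr rfl fun m _ => ?_
          ring
  -- bound
  have hnorm : ‖(N : ℂ) * P.coeff j‖ ≤ N * B := by
    rw [hDFT]
    calc ‖∑ k ∈ Finset.range N, P.eval (ω ^ k) * (ω⁻¹) ^ (j * k)‖
        ≤ ∑ k ∈ Finset.range N, ‖P.eval (ω ^ k) * (ω⁻¹) ^ (j * k)‖ := norm_sum_le _ _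
      _ ≤ ∑ k ∈ Finset.range N, B := by
          refine Finset.sum_le_sum fun k _ => ?_
          rw [norm_mul, norm_pow, norm_inv, hωnorm, inv_one, one_pow, mul_one]
          exact hB _ (by rw [norm_pow, hωnorm, one_pow])
      _ = N * B := by rw [Finset.sum_const, Finset.card_range, nsmul_eq_mul]
  have hNpos : (0:ℝ) < N := by positivity
  rw [norm_mul, Complex.norm_natCast] at hnorm
  calc ‖P.coeff j‖ = (N * ‖P.coeff j‖) / N := by field_simp
    _ ≤ (N * B) / N := by gcongr
    _ = B := by field_simp

/-- (Markov) Let `p(x) = ∑_{j=0}^d c_j x^j` be a real polynomial of degree at most `d` such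
that `|p(x)| ≤ 1` for all `x ∈ [−1,1]`. Then `|c_j| ≤ (√2 + 1)^d` for all `j = 0, …, d`. -/
theorem stmt7 (d : ℕ) (p : Polynomial ℝ) (hdeg : p.natDegree ≤ d)
    (hbound : ∀ x ∈ Set.Icc (-1 : ℝ) 1, |p.eval x| ≤ 1) :
    ∀ j ≤ d, |p.coeff j| ≤ (Real.sqrt 2 + 1) ^ d := by
  intro j hj
  set P : Polynomial ℂ := p.map (algebraMap ℝ ℂ) with hPdef
  have hP : P.natDegree ≤ d := (natDegree_map_le).trans hdeg
  have hcoeff : P.coeff j = ((p.coeff j : ℝ) : ℂ) := by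
    rw [hPdef, Polynomial.coeff_map]; rfl
  have h := auxDFT d P hP j hj ((Real.sqrt 2 + 1) ^ d)
    (fun z hz => auxCircle d p hdeg hbound z hz)
  rwa [hcoeff, Complex.norm_real, Real.norm_eq_abs] at h
end

section
/- Let α > 0 and let p(x) = Σ_{i=0}^d c_i x^i be a real polynomial of degree at most d such that p(x) ≥ 0 for all x ∈ [−1,1] and ∫_{−1}^1 p(x) dx ≤ α. Then |c_i| ≤ α · (d+1)² · (√2 + 1)^d for all i = 0, …, d. -/
open Polynomial

noncomputable section
namespace Stmt8aux

def P : ℕ → Polynomial ℝ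
  | 0 => 1
  | 1 => X
  | (k+2) => C ((2*(k:ℝ)+3)/((k:ℝ)+2)) * (X * P (k+1)) - C (((k:ℝ)+1)/((k:ℝ)+2)) * P k

lemma hrec (k : ℕ) : ((k:ℝ[X])+2) * P (k+2)
    = (2*(k:ℝ[X])+3) * (X * P (k+1)) - ((k:ℝ[X])+1) * P k := by
  have hk2 : ((k:ℝ)+2) ≠ 0 := by positivity
  have h1 : ((k:ℝ[X])+2) = C ((k:ℝ)+2) := by simp [C_add, C_eq_natCast, map_ofNat]
  have h2 : (2*(k:ℝ[X])+3) = C (2*(k:ℝ)+3) := by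
    simp [C_add, C_mul, C_eq_natCast, map_ofNat]
  have h3 : ((k:ℝ[X])+1) = C ((k:ℝ)+1) := by simp [C_add, C_eq_natCast, map_ofNat]
  rw [show P (k+2) = C ((2*(k:ℝ)+3)/((k:ℝ)+2)) * (X * P (k+1))
      - C (((k:ℝ)+1)/((k:ℝ)+2)) * P k from rfl, h1, h2, h3, mul_sub]
  simp only [← mul_assoc, ← C_mul]
  rw [mul_div_cancel₀ _ hk2, mul_div_cancel₀ _ hk2, mul_assoc]


lemma castC (a : ℕ) (b : ℝ) : ((a:ℝ[X]) + C b) = C ((a:ℝ)+b) := by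
  simp [C_add, C_eq_natCast]

lemma cast_ne (k : ℕ) : ((k:ℝ[X])+2) ≠ 0 := by
  have : ((k:ℝ[X])+2) = C ((k:ℝ)+2) := by simp [C_add, C_eq_natCast, map_ofNat]
  rw [this]
  exact C_ne_zero.mpr (by positivity)

lemma ID : ∀ k : ℕ, derivative (P (k+1)) = X * derivative (P k) + ((k:ℝ[X])+1) * P k ∧
    X * derivative (P (k+1)) = derivative (P k) + ((k:ℝ[X])+1) * P (k+1) := by
  intro k
  induction k with
  | zero => constructor <;> simp [P]
  | succ k ih =>
    obtain ⟨hI, hII⟩ := ih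
    have hd := congrArg derivative (hrec k)
    simp only [derivative_mul, derivative_sub, derivative_add, derivative_X,
      derivative_natCast, derivative_ofNat, derivative_one, zero_mul, mul_one,
      one_mul, add_zero, zero_add, derivative_mul] at hd
    have hr := hrec k
    constructor
    · apply mul_left_cancel₀ (cast_ne k)
      push_cast
      linear_combination hd + ((k:ℝ[X])+1) * hII
    · apply mul_left_cancel₀ (cast_ne k)
      push_cast
      linear_combination X*hd - ((k:ℝ[X])+2)*hr + (2*(k:ℝ[X])+3)*X*hII - ((k:ℝ[X])+2)*hI


lemma ode (k : ℕ) : derivative ((X^2 - 1) * derivative (P k))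
    = ((k:ℝ[X])*((k:ℝ[X])+1)) * P k := by
  have e1 := (ID k).1
  have e2 := (ID k).2
  have e1' := congrArg derivative e1
  have e2' := congrArg derivative e2
  simp only [derivative_mul, derivative_sub, derivative_add, derivative_X,
    derivative_natCast, derivative_ofNat, derivative_one, zero_mul, mul_one,
    one_mul, add_zero, zero_add] at e1' e2'
  simp only [derivative_mul, derivative_sub, derivative_add, derivative_X,
    derivative_natCast, derivative_ofNat, derivative_one, derivative_pow, C_eq_natCast, Nat.cast_ofNat, map_ofNat,
    zero_mul, mul_one, one_mul, add_zero, zero_add]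
  linear_combination (-(X:ℝ[X]))*e1' + e2' + (k:ℝ[X])*e1


def J (q : ℝ[X]) : ℝ := ∫ x in (-1:ℝ)..1, q.eval x

lemma J_intble (q : ℝ[X]) : IntervalIntegrable (fun x => q.eval x)
    MeasureTheory.volume (-1:ℝ) 1 := q.continuous.intervalIntegrable _ _

lemma J_add (q r : ℝ[X]) : J (q + r) = J q + J r := by
  unfold J
  simp only [eval_add]
  exact intervalIntegral.integral_add (J_intble q) (J_intble r)

lemma J_sub (q r : ℝ[X]) : J (q - r) = J q - J r := by
  unfold J
  simp only [eval_sub]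
  exact intervalIntegral.integral_sub (J_intble q) (J_intble r)

lemma J_Cmul (a : ℝ) (q : ℝ[X]) : J (C a * q) = a * J q := by
  unfold J
  simp only [eval_mul, eval_C]
  exact intervalIntegral.integral_const_mul a _

lemma J_deriv (q : ℝ[X]) : J (derivative q) = q.eval 1 - q.eval (-1) := by
  have := intervalIntegral.integral_eq_sub_of_hasDerivAt (a := (-1:ℝ)) (b := 1)
    (f := fun x => q.eval x) (f' := fun x => (derivative q).eval x)
    (fun x _ => q.hasDerivAt x) (J_intble _)
  simpa [J] using this

lemma J_one : J 1 = 2 := by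
  simp [J]
  norm_num

lemma orth {j k : ℕ} (h : j ≠ k) : J (P j * P k) = 0 := by
  set Wa : ℝ[X] := (X^2 - 1) * (derivative (P j) * P k - P j * derivative (P k)) with hWa
  have hD : derivative Wa = C ((j:ℝ)*((j:ℝ)+1) - (k:ℝ)*((k:ℝ)+1)) * (P j * P k) := by
    have oj := ode j
    have ok := ode k
    have hC : (C ((j:ℝ)*((j:ℝ)+1) - (k:ℝ)*((k:ℝ)+1)) : ℝ[X])
        = ((j:ℝ[X])*((j:ℝ[X])+1) - (k:ℝ[X])*((k:ℝ[X])+1)) := by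
      simp [C_sub, C_add, C_mul, C_eq_natCast]
    rw [hC, hWa]
    simp only [derivative_mul, derivative_sub, derivative_add, derivative_X,
      derivative_natCast, derivative_ofNat, derivative_one, derivative_pow,
      C_eq_natCast, Nat.cast_ofNat, map_ofNat,
      zero_mul, mul_one, one_mul, add_zero, zero_add, sub_zero] at oj ok ⊢
    linear_combination (P k) * oj - (P j) * ok
  have hev1 : Wa.eval 1 = 0 := by simp [hWa]
  have hevm : Wa.eval (-1) = 0 := by simp [hWa]
  have h0 : J (derivative Wa) = 0 := by rw [J_deriv, hev1, hevm, sub_zero]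
  rw [hD, J_Cmul] at h0
  have hc : ((j:ℝ)*((j:ℝ)+1) - (k:ℝ)*((k:ℝ)+1)) ≠ 0 := by
    have hne : (j:ℝ) - (k:ℝ) ≠ 0 := sub_ne_zero.mpr (by exact_mod_cast h)
    have hpos : (0:ℝ) < (j:ℝ)+(k:ℝ)+1 := by positivity
    have key : (j:ℝ)*((j:ℝ)+1) - (k:ℝ)*((k:ℝ)+1) = ((j:ℝ)-(k:ℝ))*((j:ℝ)+(k:ℝ)+1) := by ring
    rw [key]
    exact mul_ne_zero hne (ne_of_gt hpos)
  exact (mul_eq_zero.mp h0).resolve_left hc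


lemma castA (k : ℕ) : ((k:ℝ[X])+2) = C ((k:ℝ)+2) := by
  simp [C_add, C_eq_natCast, map_ofNat]
lemma castB (k : ℕ) : (2*(k:ℝ[X])+3) = C (2*(k:ℝ)+3) := by
  simp [C_add, C_mul, C_eq_natCast, map_ofNat]
lemma castD (k : ℕ) : ((k:ℝ[X])+1) = C ((k:ℝ)+1) := by
  simp [C_add, C_eq_natCast, map_ofNat]

lemma Jx (k : ℕ) : J (X * P (k+1) * P k) = (((k:ℝ)+1)/(2*(k:ℝ)+3)) * J (P k * P k) := by
  have hr := hrec k
  rw [castA, castB, castD] at hr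
  have e := congrArg J (show C ((k:ℝ)+2) * (P (k+2) * P k)
      = C (2*(k:ℝ)+3) * (X * P (k+1) * P k) - C ((k:ℝ)+1) * (P k * P k) by
    linear_combination (P k) * hr)
  rw [J_sub, J_Cmul, J_Cmul, J_Cmul, orth (by omega : k+2 ≠ k)] at e
  have h3 : (2*(k:ℝ)+3) ≠ 0 := by positivity
  field_simp
  linarith [e]

lemma NK : ∀ k : ℕ, J (P k * P k) = 2/(2*(k:ℝ)+1) := by
  intro k
  induction k with
  | zero =>
    have : P 0 * P 0 = 1 := by simp [P]
    rw [this, J_one]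
    norm_num
  | succ k ih =>
    match k, ih with
    | 0, ih =>
      have h1 : P 1 * P 1 = X * P 1 * P 0 := by simp [P]
      rw [h1, Jx 0, ih]
      norm_num
    | (m+1), ih =>
      have hr := hrec m
      rw [castA, castB, castD] at hr
      have e := congrArg J (show C ((m:ℝ)+2) * (P (m+2) * P (m+2))
          = C (2*(m:ℝ)+3) * (X * P (m+2) * P (m+1)) - C ((m:ℝ)+1) * (P m * P (m+2)) by
        linear_combination (P (m+2)) * hr)
      rw [J_sub, J_Cmul, J_Cmul, J_Cmul, orth (by omega : m ≠ m+2), Jx (m+1), ih] at e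
      have h1 : (2*(m:ℝ)+3) ≠ 0 := by positivity
      have h2 : (2*(m:ℝ)+5) ≠ 0 := by positivity
      have h3 : ((m:ℝ)+2) ≠ 0 := by positivity
      push_cast at e ⊢
      apply mul_left_cancel₀ h3
      rw [e]
      field_simp
      ring


open intervalIntegral in
lemma lap {x : ℝ} (hx : x^2 ≤ 1) (k : ℕ) :
    (∫ φ in (0:ℝ)..Real.pi,
        ((x:ℂ) + (Real.sqrt (1-x^2) : ℂ) * Complex.cos φ * Complex.I)^k)
      = (Real.pi:ℂ) * (((P k).eval x : ℝ) : ℂ) := by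
  set s : ℝ := Real.sqrt (1-x^2) with hs
  have hs2 : (s:ℝ)^2 = 1 - x^2 := Real.sq_sqrt (by nlinarith)
  set w : ℂ → ℂ := fun t => (x:ℂ) + (s:ℂ) * Complex.cos t * Complex.I with hw
  have hwc : Continuous (fun φ:ℝ => w ↑φ) := by
    apply Continuous.add continuous_const
    exact (continuous_const.mul (Complex.continuous_cos.comp Complex.continuous_ofReal)).mul
      continuous_const
  have key : ∀ k : ℕ,
      ((∫ φ in (0:ℝ)..Real.pi, (w ↑φ)^k) = (Real.pi:ℂ) * (((P k).eval x : ℝ) : ℂ)) ∧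
      ((∫ φ in (0:ℝ)..Real.pi, (w ↑φ)^(k+1))
        = (Real.pi:ℂ) * (((P (k+1)).eval x : ℝ) : ℂ)) := by
    intro k
    induction k with
    | zero =>
      constructor
      · simp [P]
      · have hg : IntervalIntegrable (fun φ:ℝ => ((s * Real.cos φ:ℝ):ℂ) * Complex.I)
            MeasureTheory.volume (0:ℝ) Real.pi := by
          apply Continuous.intervalIntegrable
          continuity
        have h1 : Set.EqOn (fun φ:ℝ => (w ↑φ)^(0+1))
            (fun φ:ℝ => (x:ℂ) + ((s * Real.cos φ:ℝ):ℂ) * Complex.I)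
            (Set.uIcc (0:ℝ) Real.pi) := by
          intro φ _
          simp only [hw, pow_succ, pow_zero, one_mul]
          push_cast
          ring
        rw [intervalIntegral.integral_congr h1,
          intervalIntegral.integral_add intervalIntegrable_const hg,
          intervalIntegral.integral_mul_const]
        have h2 : (∫ φ in (0:ℝ)..Real.pi, ((s * Real.cos φ:ℝ):ℂ))
            = (((∫ φ in (0:ℝ)..Real.pi, s * Real.cos φ) : ℝ) : ℂ) :=
          intervalIntegral.integral_ofReal
        rw [h2, intervalIntegral.integral_const_mul, integral_cos]
        simp [P, Complex.real_smul]
    | succ k ih =>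
      obtain ⟨ih0, ih1⟩ := ih
      refine ⟨ih1, ?_⟩
      have hA : IntervalIntegrable (fun φ:ℝ => ((k:ℂ)+2)*(w ↑φ)^(k+2))
          MeasureTheory.volume (0:ℝ) Real.pi :=
        (continuous_const.mul (hwc.pow _)).intervalIntegrable _ _
      have hB : IntervalIntegrable (fun φ:ℝ => (2*(k:ℂ)+3)*(x:ℂ)*(w ↑φ)^(k+1))
          MeasureTheory.volume (0:ℝ) Real.pi :=
        (continuous_const.mul (hwc.pow _)).intervalIntegrable _ _
      have hCc : IntervalIntegrable (fun φ:ℝ => ((k:ℂ)+1)*(w ↑φ)^k)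
          MeasureTheory.volume (0:ℝ) Real.pi :=
        (continuous_const.mul (hwc.pow _)).intervalIntegrable _ _
      have hFTC : (∫ φ in (0:ℝ)..Real.pi,
          (((k:ℂ)+2)*(w ↑φ)^(k+2) - (2*(k:ℂ)+3)*(x:ℂ)*(w ↑φ)^(k+1) + ((k:ℂ)+1)*(w ↑φ)^k))
          = 0 := by
        have hder : ∀ φ : ℝ, φ ∈ Set.uIcc (0:ℝ) Real.pi →
            HasDerivAt (fun ψ:ℝ => (s:ℂ) * Complex.sin ↑ψ * Complex.I * (w ↑ψ)^(k+1))
              (((k:ℂ)+2)*(w ↑φ)^(k+2) - (2*(k:ℂ)+3)*(x:ℂ)*(w ↑φ)^(k+1) + ((k:ℂ)+1)*(w ↑φ)^k)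
              φ := by
          intro φ _
          have hwd : HasDerivAt w ((s:ℂ) * (-Complex.sin ↑φ) * Complex.I) ↑φ :=
            (((Complex.hasDerivAt_cos (↑φ)).const_mul ((s:ℂ))).mul_const Complex.I).const_add _
          have hu : HasDerivAt (fun t:ℂ => (s:ℂ) * Complex.sin t * Complex.I)
              ((s:ℂ) * Complex.cos ↑φ * Complex.I) ↑φ :=
            ((Complex.hasDerivAt_sin (↑φ)).const_mul ((s:ℂ))).mul_const Complex.I
          have hF : HasDerivAt (fun t:ℂ => (s:ℂ) * Complex.sin t * Complex.I * (w t)^(k+1))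
              ((s:ℂ) * Complex.cos ↑φ * Complex.I * (w ↑φ)^(k+1)
                + (s:ℂ) * Complex.sin ↑φ * Complex.I *
                  (((k:ℂ)+1) * (w ↑φ)^k * ((s:ℂ) * (-Complex.sin ↑φ) * Complex.I))) ↑φ := by
            have := hu.mul (hwd.pow (k+1))
            simpa [Pi.mul_def, Pi.pow_apply] using this
          have hcomp := hF.comp_ofReal
          convert hcomp using 1
          have h1 : Complex.sin ↑φ^2 + Complex.cos ↑φ^2 = 1 := Complex.sin_sq_add_cos_sq _
          have h2 : ((s:ℂ))^2 = 1 - ((x:ℂ))^2 := by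
            have h := congrArg (fun r : ℝ => (r : ℂ)) hs2
            push_cast at h
            exact h
          have h3 : Complex.I^2 = -1 := Complex.I_sq
          simp only [hw]
          set u : ℂ := (x:ℂ) + (s:ℂ) * Complex.cos ↑φ * Complex.I with hu2
          linear_combination (((k:ℂ)+1) * u^k * (s:ℂ)^2 * Complex.I^2) * h1
            - (((k:ℂ)+1) * u^k) * h2 + (((k:ℂ)+1) * u^k * (s:ℂ)^2) * h3
        have hi := intervalIntegral.integral_eq_sub_of_hasDerivAt hder ((hA.sub hB).add hCc)
        rw [hi]
        rw [show Complex.sin ((Real.pi:ℝ):ℂ) = 0 by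
          rw [← Complex.ofReal_sin, Real.sin_pi]; simp]
        rw [show Complex.sin ((0:ℝ):ℂ) = 0 by norm_num]
        ring
      rw [intervalIntegral.integral_add (hA.sub hB) hCc,
        intervalIntegral.integral_sub hA hB,
        intervalIntegral.integral_const_mul, intervalIntegral.integral_const_mul,
        intervalIntegral.integral_const_mul, ih0, ih1] at hFTC
      have her := congrArg (fun q => Polynomial.eval x q) (hrec k)
      simp only [eval_mul, eval_add, eval_sub, eval_natCast, eval_ofNat, eval_X, eval_one,
        eval_mul, eval_add] at her
      have her' := congrArg (fun r : ℝ => (r:ℂ)) her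
      push_cast at her'
      have hC : ((k:ℂ)+2) ≠ 0 := by
        have h := Nat.cast_ne_zero (R := ℂ).mpr (show k+2 ≠ 0 by omega)
        push_cast at h
        exact h
      show (∫ φ in (0:ℝ)..Real.pi, (w ↑φ)^(k+2))
        = (Real.pi:ℂ) * (((P (k+2)).eval x : ℝ) : ℂ)
      apply mul_left_cancel₀ hC
      push_cast
      linear_combination hFTC - (Real.pi:ℂ) * her'
  exact (key k).1


lemma abs_evalP_le_one {x : ℝ} (hx : x^2 ≤ 1) (k : ℕ) : |(P k).eval x| ≤ 1 := by
  have hl := lap hx k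
  set s : ℝ := Real.sqrt (1-x^2) with hs
  have hs2 : (s:ℝ)^2 = 1 - x^2 := Real.sq_sqrt (by nlinarith)
  have hb : ∀ φ ∈ Set.uIoc (0:ℝ) Real.pi,
      ‖((x:ℂ) + (s : ℂ) * Complex.cos φ * Complex.I)^k‖ ≤ 1 := by
    intro φ _
    rw [norm_pow]
    apply pow_le_one₀ (norm_nonneg _)
    have h1 : ((x:ℂ) + (s : ℂ) * Complex.cos (φ:ℂ) * Complex.I)
        = ((x:ℝ):ℂ) + ((s * Real.cos φ : ℝ):ℂ) * Complex.I := by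
      push_cast [← Complex.ofReal_cos]
      ring
    rw [h1]
    have h2 : ‖(((x:ℝ):ℂ) + ((s * Real.cos φ : ℝ):ℂ) * Complex.I)‖
        = Real.sqrt (x^2 + (s * Real.cos φ)^2) := Complex.norm_add_mul_I _ _
    have h3 : x^2 + (s * Real.cos φ)^2 ≤ 1 := by
      nlinarith [Real.cos_sq_le_one φ, sq_nonneg s, sq_nonneg (Real.cos φ)]
    calc ‖_‖ = Real.sqrt (x^2 + (s * Real.cos φ)^2) := h2
    _ ≤ Real.sqrt 1 := Real.sqrt_le_sqrt h3
    _ = 1 := Real.sqrt_one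
  have hn := intervalIntegral.norm_integral_le_of_norm_le_const hb
  rw [hl, norm_mul] at hn
  simp only [Complex.norm_real, Real.norm_eq_abs, sub_zero, one_mul] at hn
  have hpi := Real.pi_pos
  rw [abs_of_pos hpi] at hn
  nlinarith [abs_nonneg ((P k).eval x)]


lemma coeff_abs_le : ∀ k i : ℕ, |(P k).coeff i| ≤ (1 + Real.sqrt 2)^k := by
  have hsq : Real.sqrt 2 ^ 2 = 2 := Real.sq_sqrt (by norm_num)
  have hs1 : (1:ℝ) ≤ Real.sqrt 2 := by nlinarith [Real.sqrt_nonneg 2]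
  have hc1 : (1:ℝ) ≤ 1 + Real.sqrt 2 := by linarith
  have hc0 : (0:ℝ) ≤ 1 + Real.sqrt 2 := by linarith
  have key : ∀ k : ℕ, (∀ i, |(P k).coeff i| ≤ (1 + Real.sqrt 2)^k) ∧
      (∀ i, |(P (k+1)).coeff i| ≤ (1 + Real.sqrt 2)^(k+1)) := by
    intro k
    induction k with
    | zero =>
      constructor
      · intro i
        rw [show P 0 = 1 from rfl, coeff_one, pow_zero]
        split_ifs <;> simp
      · intro i
        rw [show P 1 = X from rfl, coeff_X, pow_one]
        split_ifs <;> simp <;> nlinarith [Real.sqrt_nonneg 2]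
    | succ k ih =>
      obtain ⟨ih0, ih1⟩ := ih
      refine ⟨ih1, ?_⟩
      intro i
      have hk2 : (0:ℝ) < (k:ℝ) + 2 := by positivity
      have hco : (P (k+2)).coeff i
          = ((2*(k:ℝ)+3)/((k:ℝ)+2)) * (X * P (k+1)).coeff i
            - (((k:ℝ)+1)/((k:ℝ)+2)) * (P k).coeff i := by
        rw [show P (k+2) = C ((2*(k:ℝ)+3)/((k:ℝ)+2)) * (X * P (k+1))
          - C (((k:ℝ)+1)/((k:ℝ)+2)) * P k from rfl]
        simp [coeff_sub, coeff_C_mul]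
      have hXc : |(X * P (k+1)).coeff i| ≤ (1 + Real.sqrt 2)^(k+1) := by
        cases i with
        | zero => simp [coeff_X_mul_zero]; positivity
        | succ n => rw [coeff_X_mul]; exact ih1 n
      have ha : |(2*(k:ℝ)+3)/((k:ℝ)+2)| ≤ 2 := by
        rw [abs_of_nonneg (by positivity)]
        rw [div_le_iff₀ hk2]
        linarith
      have hb : |((k:ℝ)+1)/((k:ℝ)+2)| ≤ 1 := by
        rw [abs_of_nonneg (by positivity)]
        rw [div_le_one hk2]
        linarith
      rw [hco]
      calc |((2*(k:ℝ)+3)/((k:ℝ)+2)) * (X * P (k+1)).coeff i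
            - (((k:ℝ)+1)/((k:ℝ)+2)) * (P k).coeff i|
          ≤ |((2*(k:ℝ)+3)/((k:ℝ)+2))| * |(X * P (k+1)).coeff i|
            + |(((k:ℝ)+1)/((k:ℝ)+2))| * |(P k).coeff i| := by
            rw [← abs_mul, ← abs_mul]; exact abs_sub _ _
        _ ≤ 2 * (1 + Real.sqrt 2)^(k+1) + 1 * (1 + Real.sqrt 2)^k := by
            apply add_le_add
            · exact mul_le_mul ha hXc (abs_nonneg _) (by norm_num)
            · exact mul_le_mul hb (ih0 i) (abs_nonneg _) (by norm_num)
        _ ≤ (1 + Real.sqrt 2)^(k+2) := by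
            have h1 : (1 + Real.sqrt 2)^(k+1) = (1 + Real.sqrt 2)^k * (1 + Real.sqrt 2) := by ring
            have h2 : (1 + Real.sqrt 2)^(k+2) = (1 + Real.sqrt 2)^k * (1 + Real.sqrt 2)^2 := by ring
            have hp : (0:ℝ) ≤ (1 + Real.sqrt 2)^k := by positivity
            nlinarith [hp]
  intro k i
  exact (key k).1 i


lemma P_deg : ∀ k : ℕ, (P k).natDegree ≤ k ∧ (P k).coeff k ≠ 0 := by
  have key : ∀ k : ℕ, ((P k).natDegree ≤ k ∧ (P k).coeff k ≠ 0) ∧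
      ((P (k+1)).natDegree ≤ k+1 ∧ (P (k+1)).coeff (k+1) ≠ 0) := by
    intro k
    induction k with
    | zero =>
      refine ⟨⟨?_, ?_⟩, ?_, ?_⟩
      · simp [show P 0 = 1 from rfl]
      · simp [show P 0 = 1 from rfl]
      · simp [show P 1 = X from rfl, natDegree_X_le]
      · simp [show P 1 = X from rfl]
    | succ k ih =>
      obtain ⟨⟨hd0, hc0⟩, hd1, hc1⟩ := ih
      refine ⟨⟨hd1, hc1⟩, ?_, ?_⟩
      · rw [show P (k+2) = C ((2*(k:ℝ)+3)/((k:ℝ)+2)) * (X * P (k+1))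
          - C (((k:ℝ)+1)/((k:ℝ)+2)) * P k from rfl]
        apply le_trans (natDegree_sub_le _ _)
        apply max_le
        · apply le_trans (natDegree_C_mul_le _ _)
          apply le_trans (natDegree_mul_le)
          have := natDegree_X_le (R := ℝ)
          omega
        · apply le_trans (natDegree_C_mul_le _ _)
          omega
      · rw [show P (k+2) = C ((2*(k:ℝ)+3)/((k:ℝ)+2)) * (X * P (k+1))
          - C (((k:ℝ)+1)/((k:ℝ)+2)) * P k from rfl]
        rw [coeff_sub, coeff_C_mul, coeff_C_mul, coeff_X_mul,
          coeff_eq_zero_of_natDegree_lt (by omega : (P k).natDegree < k+2)]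
        have ha : (2*(k:ℝ)+3)/((k:ℝ)+2) ≠ 0 := by positivity
        simp only [mul_zero, sub_zero]
        exact mul_ne_zero ha hc1
  exact fun k => (key k).1

lemma rep : ∀ n : ℕ, ∀ q : ℝ[X], q.natDegree ≤ n →
    ∃ a : ℕ → ℝ, q = ∑ k ∈ Finset.range (n+1), C (a k) * P k := by
  intro n
  induction n with
  | zero =>
    intro q hq
    refine ⟨fun _ => q.coeff 0, ?_⟩
    rw [Polynomial.eq_C_of_natDegree_le_zero hq]
    simp [show P 0 = 1 from rfl]
  | succ n ih =>
    intro q hq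
    set t : ℝ := q.coeff (n+1) / (P (n+1)).coeff (n+1) with ht
    set r : ℝ[X] := q - C t * P (n+1) with hr
    have hrd : r.natDegree ≤ n := by
      apply natDegree_le_iff_coeff_eq_zero.mpr
      intro m hm
      rcases eq_or_lt_of_le (Nat.succ_le_of_lt hm) with h | h
      · rw [hr, coeff_sub, coeff_C_mul, ← h, ht,
          div_mul_cancel₀ _ ((P_deg (n+1)).2)]
        ring
      · rw [hr, coeff_sub, coeff_C_mul,
          coeff_eq_zero_of_natDegree_lt (lt_of_le_of_lt hq h),
          coeff_eq_zero_of_natDegree_lt (lt_of_le_of_lt (P_deg (n+1)).1 h)]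
        ring
    obtain ⟨a, ha⟩ := ih r hrd
    refine ⟨fun k => if k = n+1 then t else a k, ?_⟩
    rw [Finset.sum_range_succ]
    have : ∑ k ∈ Finset.range (n+1), C (if k = n+1 then t else a k) * P k
        = ∑ k ∈ Finset.range (n+1), C (a k) * P k := by
      apply Finset.sum_congr rfl
      intro k hk
      rw [if_neg (by simp at hk; omega)]
    rw [this, ← ha]
    simp [hr]

lemma J_sum (s : Finset ℕ) (f : ℕ → ℝ[X]) : J (∑ i ∈ s, f i) = ∑ i ∈ s, J (f i) := by
  induction s using Finset.cons_induction with
  | empty => simp [J]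
  | cons i s his ih =>
    rw [Finset.sum_cons, Finset.sum_cons, J_add, ih]

lemma sum_odd (n : ℕ) : ∑ j ∈ Finset.range n, (2*(j:ℝ)+1) = (n:ℝ)^2 := by
  induction n with
  | zero => simp
  | succ n ih =>
    rw [Finset.sum_range_succ, ih]
    push_cast
    ring

end Stmt8aux


open Stmt8aux

/-- Let `α > 0` and let `p(x) = ∑_{i=0}^d c_i x^i` be a real polynomial of degree at most
`d` such that `p(x) ≥ 0` for all `x ∈ [−1,1]` and `∫_{−1}^1 p(x) dx ≤ α`. Then
`|c_i| ≤ α · (d+1)² · (√2 + 1)^d` for all `i = 0, …, d`. -/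
theorem stmt8 (d : ℕ) (α : ℝ) (hα : 0 < α) (p : Polynomial ℝ) (hdeg : p.natDegree ≤ d)
    (hpos : ∀ x ∈ Set.Icc (-1 : ℝ) 1, 0 ≤ p.eval x)
    (hint : (∫ x in (-1 : ℝ)..1, p.eval x) ≤ α) :
    ∀ i ≤ d, |p.coeff i| ≤ α * ((d : ℝ) + 1) ^ 2 * (Real.sqrt 2 + 1) ^ d := by
  intro i hi
  obtain ⟨a, hrep⟩ := rep d p hdeg
  have hJp : ∀ k, k ≤ d → |a k| ≤ α * (2*(k:ℝ)+1)/2 := by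
    intro k hk
    have h1 : J (p * P k) = a k * (2/(2*(k:ℝ)+1)) := by
      rw [hrep, Finset.sum_mul, J_sum, Finset.sum_eq_single k]
      · rw [mul_assoc, J_Cmul, NK]
      · intro j _ hne
        rw [mul_assoc, J_Cmul, orth hne, mul_zero]
      · intro hk'
        exact absurd (Finset.mem_range.mpr (by omega)) hk'
    have h2 : |J (p * P k)| ≤ α := by
      have hab : (-1:ℝ) ≤ 1 := by norm_num
      have e1 : |J (p * P k)| ≤ ∫ x in (-1:ℝ)..1, |(p * P k).eval x| :=
        intervalIntegral.abs_integral_le_integral_abs hab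
      have e2 : (∫ x in (-1:ℝ)..1, |(p * P k).eval x|) ≤ ∫ x in (-1:ℝ)..1, p.eval x := by
        apply intervalIntegral.integral_mono_on hab
        · exact ((p * P k).continuous.abs).intervalIntegrable _ _
        · exact J_intble p
        · intro x hx
          rw [eval_mul, abs_mul]
          have hx2 : x^2 ≤ 1 := by
            obtain ⟨h1', h2'⟩ := hx
            nlinarith
          have hb := abs_evalP_le_one hx2 k
          have hp := hpos x hx
          calc |eval x p| * |eval x (P k)| ≤ |eval x p| * 1 :=
              mul_le_mul_of_nonneg_left hb (abs_nonneg _)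
            _ = eval x p := by rw [mul_one, abs_of_nonneg hp]
      exact le_trans e1 (le_trans e2 hint)
    rw [h1, abs_mul, abs_of_pos (by positivity : (0:ℝ) < 2/(2*(k:ℝ)+1))] at h2
    rw [← mul_div_assoc] at h2
    rw [div_le_iff₀ (by positivity : (0:ℝ) < 2*(k:ℝ)+1)] at h2
    rw [mul_div_assoc]
    nlinarith
  have hci : p.coeff i = ∑ k ∈ Finset.range (d+1), a k * (P k).coeff i := by
    rw [hrep, finset_sum_coeff]
    exact Finset.sum_congr rfl (fun k _ => coeff_C_mul _)
  rw [hci]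
  have hs0 : (0:ℝ) ≤ Real.sqrt 2 := Real.sqrt_nonneg 2
  have hterm : ∀ k ∈ Finset.range (d+1),
      |a k * (P k).coeff i| ≤ (α * (2*(k:ℝ)+1)/2) * (1+Real.sqrt 2)^d := by
    intro k hk
    have hkd : k ≤ d := by
      have := Finset.mem_range.mp hk
      omega
    rw [abs_mul]
    have h1 := hJp k hkd
    have h2 := coeff_abs_le k i
    have h3 : (1+Real.sqrt 2)^k ≤ (1+Real.sqrt 2)^d :=
      pow_le_pow_right₀ (by linarith) hkd
    calc |a k| * |(P k).coeff i| ≤ (α * (2*(k:ℝ)+1)/2) * (1+Real.sqrt 2)^k :=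
        mul_le_mul h1 h2 (abs_nonneg _) (by positivity)
      _ ≤ (α * (2*(k:ℝ)+1)/2) * (1+Real.sqrt 2)^d :=
        mul_le_mul_of_nonneg_left h3 (by positivity)
  calc |∑ k ∈ Finset.range (d+1), a k * (P k).coeff i|
      ≤ ∑ k ∈ Finset.range (d+1), |a k * (P k).coeff i| :=
        Finset.abs_sum_le_sum_abs _ _
    _ ≤ ∑ k ∈ Finset.range (d+1), (α * (2*(k:ℝ)+1)/2) * (1+Real.sqrt 2)^d :=
        Finset.sum_le_sum hterm
    _ = (α/2) * (1+Real.sqrt 2)^d * ∑ k ∈ Finset.range (d+1), (2*(k:ℝ)+1) := by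
        rw [Finset.mul_sum]
        exact Finset.sum_congr rfl (fun k _ => by ring)
    _ = (α/2) * (1+Real.sqrt 2)^d * ((d:ℝ)+1)^2 := by
        rw [sum_odd (d+1)]
        push_cast
        ring
    _ ≤ α * ((d : ℝ) + 1) ^ 2 * (Real.sqrt 2 + 1) ^ d := by
        rw [show Real.sqrt 2 + 1 = 1 + Real.sqrt 2 from add_comm _ _]
        have hp1 : (0:ℝ) ≤ (1+Real.sqrt 2)^d := by positivity
        have hp2 : (0:ℝ) ≤ ((d:ℝ)+1)^2 := by positivity
        nlinarith [mul_nonneg (mul_nonneg (by linarith : (0:ℝ) ≤ α/2) hp1) hp2]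
end
end

section
/- Let α > 0 and let p be a real polynomial of degree at most d such that p(x) ≥ 0 for all x ∈ [−1,1] and ∫_{−1}^1 p(x) dx ≤ α. Then p(x) ≤ α · (d+1)² for all x ∈ [−1,1]. -/
open Polynomial

namespace Stmt9Proof

open Finset Real


theorem derivative_finset_prod {ι : Type*} [DecidableEq ι] (s : Finset ι) (f : ι → Polynomial ℝ) :
    derivative (∏ i ∈ s, f i) = ∑ i ∈ s, (∏ j ∈ s.erase i, f j) * derivative (f i) := by
  induction s using Finset.induction_on with
  | empty => simp
  | insert _ _ ha ih =>
    rename_i a s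
    rw [Finset.prod_insert ha, derivative_mul, ih, Finset.sum_insert ha,
      Finset.erase_insert ha, Finset.mul_sum, mul_comm (derivative (f a))]
    congr 1
    apply Finset.sum_congr rfl
    intro j hj
    rw [Finset.erase_insert_of_ne (by rintro rfl; exact ha hj),
      Finset.prod_insert (fun h => ha (Finset.mem_of_mem_erase h)), mul_assoc]

noncomputable def nod (n k : ℕ) : ℝ := Real.cos (k * π / n)

lemma nod_le_one (n k : ℕ) : nod n k ≤ 1 := Real.cos_le_one _

lemma nod_mem_Icc (n k : ℕ) : nod n k ∈ Set.Icc (-1 : ℝ) 1 :=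
  ⟨Real.neg_one_le_cos _, Real.cos_le_one _⟩

variable {n : ℕ}

lemma nod_arg_mem (hn : 1 ≤ n) {k : ℕ} (hk : k ≤ n) : (k * π / n : ℝ) ∈ Set.Icc 0 π := by
  have hπ := Real.pi_pos
  have hn' : (0:ℝ) < n := by exact_mod_cast hn
  constructor
  · positivity
  · rw [div_le_iff₀ hn']
    have : (k:ℝ) ≤ n := by exact_mod_cast hk
    nlinarith

lemma nod_lt (hn : 1 ≤ n) {i j : ℕ} (hij : i < j) (hj : j ≤ n) : nod n j < nod n i := by
  have hπ := Real.pi_pos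
  have hn' : (0:ℝ) < n := by exact_mod_cast hn
  apply Real.strictAntiOn_cos (nod_arg_mem hn (le_trans hij.le hj)) (nod_arg_mem hn hj)
  have : (i:ℝ) < j := by exact_mod_cast hij
  rw [div_lt_div_iff₀ hn' hn']
  nlinarith [mul_pos (mul_pos (sub_pos.mpr this) hπ) hn']

lemma nod_inj (hn : 1 ≤ n) : Set.InjOn (nod n) (Finset.range (n+1)) := by
  intro i hi j hj h
  simp only [Finset.coe_range, Set.mem_Iio] at hi hj
  rcases lt_trichotomy i j with hij | hij | hij
  · exact absurd h (ne_of_gt (nod_lt hn hij (by omega)))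
  · exact hij
  · exact absurd h (ne_of_lt (nod_lt hn hij (by omega)))



variable {n : ℕ}

noncomputable def lam (n k : ℕ) : ℝ :=
  eval 1 (derivative (Lagrange.basis (Finset.range (n+1)) (nod n) k))

lemma deriv_eval_one (hn : 1 ≤ n) (Q : Polynomial ℝ) (hQ : Q.natDegree ≤ n) :
    eval 1 (derivative Q) = ∑ k ∈ Finset.range (n+1), eval (nod n k) Q * lam n k := by
  have hdlt : Q.degree < (#(Finset.range (n+1)) : WithBot ℕ) := by
    rw [Finset.card_range]
    exact lt_of_le_of_lt Q.degree_le_natDegree (by exact_mod_cast Nat.lt_succ_of_le hQ)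
  conv_lhs => rw [Lagrange.eq_interpolate (nod_inj hn) hdlt]
  rw [Lagrange.interpolate_apply, derivative_sum, eval_finset_sum]
  apply Finset.sum_congr rfl
  intro k hk
  rw [derivative_C_mul, eval_mul, eval_C, lam]

lemma prod_sign (hn : 1 ≤ n) {k : ℕ} (hk : k ≤ n) :
    0 < (-1:ℝ)^k * ∏ i ∈ (Finset.range (n+1)).erase k, (nod n k - nod n i) := by
  have hsplit : (Finset.range (n+1)).erase k = Finset.range k ∪ Finset.Ico (k+1) (n+1) := by
    ext i; simp only [Finset.mem_erase, Finset.mem_range, Finset.mem_union, Finset.mem_Ico]; omega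
  have hdisj : Disjoint (Finset.range k) (Finset.Ico (k+1) (n+1)) := by
    rw [Finset.disjoint_left]; intro i hi hi'
    simp only [Finset.mem_range] at hi; simp only [Finset.mem_Ico] at hi'; omega
  rw [hsplit, Finset.prod_union hdisj, ← mul_assoc]
  have h1 : (0:ℝ) < (-1:ℝ)^k * ∏ i ∈ Finset.range k, (nod n k - nod n i) := by
    have heq : (-1:ℝ)^k * ∏ i ∈ Finset.range k, (nod n k - nod n i)
        = ∏ i ∈ Finset.range k, ((-1) * (nod n k - nod n i)) := by
      rw [Finset.prod_mul_distrib, Finset.prod_const, Finset.card_range]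
    rw [heq]
    apply Finset.prod_pos
    intro i hi
    have := nod_lt hn (Finset.mem_range.mp hi) hk
    linarith
  have h2 : (0:ℝ) < ∏ i ∈ Finset.Ico (k+1) (n+1), (nod n k - nod n i) := by
    apply Finset.prod_pos
    intro i hi
    simp only [Finset.mem_Ico] at hi
    exact sub_pos.mpr (nod_lt hn hi.1 (by omega))
  exact mul_pos h1 h2

lemma lam_eq {k : ℕ} :
    lam n k = ∑ j ∈ (Finset.range (n+1)).erase k,
      (∏ i ∈ ((Finset.range (n+1)).erase k).erase j,
        ((nod n k - nod n i)⁻¹ * (1 - nod n i))) * (nod n k - nod n j)⁻¹ := by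
  rw [lam, Lagrange.basis, derivative_finset_prod, eval_finset_sum]
  apply Finset.sum_congr rfl
  intro j hj
  rw [eval_mul, eval_prod]
  congr 1
  · apply Finset.prod_congr rfl
    intro i hi
    simp [Lagrange.basisDivisor]
  · simp [Lagrange.basisDivisor, derivative_C_mul]

lemma lam_sign (hn : 1 ≤ n) {k : ℕ} (hk : k ≤ n) : 0 ≤ (-1:ℝ)^k * lam n k := by
  rw [lam_eq, Finset.mul_sum]
  apply Finset.sum_nonneg
  intro j hj
  have hterm : (∏ i ∈ ((Finset.range (n+1)).erase k).erase j,
        ((nod n k - nod n i)⁻¹ * (1 - nod n i))) * (nod n k - nod n j)⁻¹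
      = (∏ i ∈ (Finset.range (n+1)).erase k, (nod n k - nod n i))⁻¹
        * ∏ i ∈ ((Finset.range (n+1)).erase k).erase j, (1 - nod n i) := by
    rw [← Finset.prod_erase_mul _ _ hj, mul_inv, ← Finset.prod_inv_distrib,
      Finset.prod_mul_distrib]
    ring
  rw [hterm]
  have key := prod_sign hn hk
  rw [show (-1:ℝ)^k * ((∏ i ∈ (Finset.range (n+1)).erase k, (nod n k - nod n i))⁻¹
        * ∏ i ∈ ((Finset.range (n+1)).erase k).erase j, (1 - nod n i))
      = ((-1:ℝ)^k * ∏ i ∈ (Finset.range (n+1)).erase k, (nod n k - nod n i))⁻¹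
        * ∏ i ∈ ((Finset.range (n+1)).erase k).erase j, (1 - nod n i) by
    rw [mul_inv]
    have : ((-1:ℝ)^k)⁻¹ = (-1:ℝ)^k := by
      rcases Nat.even_or_odd k with h | h
      · rw [h.neg_one_pow]; norm_num
      · rw [h.neg_one_pow]; norm_num
    rw [this]; ring]
  apply mul_nonneg (le_of_lt (inv_pos.mpr key))
  apply Finset.prod_nonneg
  intro i hi
  have := nod_le_one n i
  linarith

lemma sum_lam (hn : 1 ≤ n) : ∑ k ∈ Finset.range (n+1), lam n k = 0 := by
  have h := Lagrange.sum_basis (nod_inj hn) (Finset.nonempty_range_iff.mpr (Nat.succ_ne_zero n))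
  have h2 := congrArg (fun q => eval 1 (derivative q)) h
  simp only [derivative_sum, derivative_one, eval_finset_sum, eval_zero] at h2
  simpa [lam] using h2




lemma natDegree_T_le : ∀ m : ℕ, (Chebyshev.T ℝ (m:ℤ)).natDegree ≤ m
  | 0 => by simp [Chebyshev.T_zero]
  | 1 => by simp [Chebyshev.T_one]
  | (m+2) => by
    have h1 := natDegree_T_le m
    have h2 := natDegree_T_le (m+1)
    have hcast : ((m+2:ℕ):ℤ) = (m:ℤ) + 2 := by push_cast; ring
    rw [hcast, Chebyshev.T_add_two]
    apply le_trans (natDegree_sub_le _ _)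
    apply max_le
    · apply le_trans (natDegree_mul_le)
      have : (2 * X : Polynomial ℝ).natDegree ≤ 1 := by
        apply le_trans (natDegree_mul_le)
        simp
      have h2' : (Chebyshev.T ℝ ((m:ℤ)+1)).natDegree ≤ m + 1 := by
        rw [show ((m:ℤ)+1) = ((m+1:ℕ):ℤ) by push_cast; ring]; exact h2
      omega
    · omega

lemma U_eval_one : ∀ m : ℕ, (Chebyshev.U ℝ (m:ℤ)).eval 1 = m + 1
  | 0 => by simp [Chebyshev.U_zero]
  | 1 => by simp [Chebyshev.U_one]; norm_num
  | (m+2) => by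
    have h1 := U_eval_one m
    have h2 := U_eval_one (m+1)
    have hcast : ((m+2:ℕ):ℤ) = (m:ℤ) + 2 := by push_cast; ring
    rw [hcast, Chebyshev.U_add_two]
    rw [show ((m:ℤ)+1) = ((m+1:ℕ):ℤ) by push_cast; ring] at *
    simp only [eval_sub, eval_mul, eval_ofNat, eval_X, h1, h2]
    push_cast
    ring

lemma T_deriv_one (m : ℕ) (hm : 1 ≤ m) : eval 1 (derivative (Chebyshev.T ℝ (m:ℤ))) = (m:ℝ)^2 := by
  rw [Chebyshev.T_derivative_eq_U]
  rw [show ((m:ℤ) - 1) = ((m-1:ℕ):ℤ) by omega]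
  simp only [eval_mul, U_eval_one (m-1)]
  have : ((m-1:ℕ):ℝ) = (m:ℝ) - 1 := by
    have : (1:ℕ) ≤ m := hm
    push_cast [Nat.cast_sub this]
    ring
  rw [this]
  simp only [eval_intCast]
  push_cast
  ring




noncomputable def antider (p : Polynomial ℝ) : Polynomial ℝ :=
  p.sum fun i a => C (a / (i+1)) * X^(i+1)

lemma deriv_antider (p : Polynomial ℝ) : derivative (antider p) = p := by
  rw [antider, Polynomial.sum, derivative_sum]
  conv_rhs => rw [← Polynomial.sum_C_mul_X_pow_eq p]
  rw [Polynomial.sum]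
  apply Finset.sum_congr rfl
  intro i hi
  rw [derivative_C_mul, derivative_X_pow]
  rw [← mul_assoc, ← C_mul]
  have hexp : i + 1 - 1 = i := by omega
  rw [hexp]
  congr 1
  have h1 : ((i:ℝ) + 1) ≠ 0 := by positivity
  push_cast
  field_simp

lemma natDegree_antider_le (p : Polynomial ℝ) : (antider p).natDegree ≤ p.natDegree + 1 := by
  rw [antider, Polynomial.sum]
  apply Polynomial.natDegree_sum_le_of_forall_le
  intro i hi
  apply le_trans (natDegree_C_mul_le _ _)
  rw [natDegree_X_pow]
  have := Polynomial.le_natDegree_of_mem_supp i hi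
  omega

lemma ftc (p : Polynomial ℝ) (a b : ℝ) :
    (∫ x in a..b, p.eval x) = (antider p).eval b - (antider p).eval a := by
  apply intervalIntegral.integral_eq_sub_of_hasDerivAt
  · intro x hx
    have h := Polynomial.hasDerivAt (antider p) x
    rwa [deriv_antider] at h
  · exact (Polynomial.continuous p).intervalIntegrable a b



variable {n : ℕ}

lemma eval_T_nod (hn : 1 ≤ n) (k : ℕ) : eval (nod n k) (Chebyshev.T ℝ (n:ℤ)) = (-1:ℝ)^k := by
  have hn' : (n:ℝ) ≠ 0 := by positivity
  rw [nod, Chebyshev.T_real_cos]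
  have harg : ((n:ℤ):ℝ) * (k * π / n) = k * π := by
    push_cast; field_simp
  rw [harg]
  simpa using Real.cos_add_nat_mul_pi 0 k

lemma alt_sum (hn : 1 ≤ n) : ∑ k ∈ Finset.range (n+1), (-1:ℝ)^k * lam n k = (n:ℝ)^2 := by
  have h := deriv_eval_one hn (Chebyshev.T ℝ (n:ℤ)) (natDegree_T_le n)
  rw [T_deriv_one n hn] at h
  rw [h]
  apply Finset.sum_congr rfl
  intro k hk
  rw [eval_T_nod hn k]

lemma endpoint (hn : 1 ≤ n) {α : ℝ} {Q : Polynomial ℝ} (hdeg : Q.natDegree ≤ n)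
    (h0 : ∀ x ∈ Set.Icc (-1:ℝ) 1, 0 ≤ Q.eval x) (h1 : ∀ x ∈ Set.Icc (-1:ℝ) 1, Q.eval x ≤ α) :
    eval 1 (derivative Q) ≤ (n:ℝ)^2 * α / 2 := by
  rw [deriv_eval_one hn Q hdeg]
  have key : ∀ k ∈ Finset.range (n+1),
      eval (nod n k) Q * lam n k ≤ (lam n k + (-1:ℝ)^k * lam n k) * (α/2) := by
    intro k hk
    have hk' : k ≤ n := by simpa [Nat.lt_succ_iff] using hk
    have hs := lam_sign hn hk'
    have hQ0 := h0 _ (nod_mem_Icc n k)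
    have hQ1 := h1 _ (nod_mem_Icc n k)
    rcases Nat.even_or_odd k with he | ho
    · rw [he.neg_one_pow] at hs ⊢
      rw [one_mul] at hs
      nlinarith
    · rw [ho.neg_one_pow] at hs ⊢
      nlinarith
  apply le_trans (Finset.sum_le_sum key)
  rw [← Finset.sum_mul, Finset.sum_add_distrib, sum_lam hn, alt_sum hn]
  ring_nf
  rw [mul_comm]



theorem half (d : ℕ) (α : ℝ) (hα : 0 < α) (p : Polynomial ℝ) (hdeg : p.natDegree ≤ d)
    (hpos : ∀ x ∈ Set.Icc (-1 : ℝ) 1, 0 ≤ p.eval x)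
    (hint : (∫ x in (-1 : ℝ)..1, p.eval x) ≤ α) :
    ∀ x ∈ Set.Icc (0 : ℝ) 1, p.eval x ≤ α * ((d : ℝ) + 1) ^ 2 := by
  intro x₀ hx₀
  obtain ⟨hx₀0, hx₀1⟩ := hx₀
  set P := antider p with hP
  set s₀ : ℝ := (x₀+1)/2 with hs₀def
  set c₀ : ℝ := (x₀-1)/2 with hc₀def
  have hs₀ : 0 < s₀ := by rw [hs₀def]; linarith
  -- the integral from -1 to u is in [0, α] for u ∈ [-1,1]
  have hIcc : ∀ u ∈ Set.Icc (-1:ℝ) 1, 0 ≤ P.eval u - P.eval (-1) ∧ P.eval u - P.eval (-1) ≤ α := by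
    intro u hu
    obtain ⟨hu1, hu2⟩ := hu
    have e1 : (∫ x in (-1:ℝ)..u, p.eval x) = P.eval u - P.eval (-1) := ftc p (-1) u
    have e2 : (∫ x in u..(1:ℝ), p.eval x) = P.eval 1 - P.eval u := ftc p u 1
    have e3 : (∫ x in (-1:ℝ)..1, p.eval x) = P.eval 1 - P.eval (-1) := ftc p (-1) 1
    have nn1 : 0 ≤ (∫ x in (-1:ℝ)..u, p.eval x) := by
      apply intervalIntegral.integral_nonneg hu1
      intro t ht
      exact hpos t ⟨ht.1, le_trans ht.2 hu2⟩
    have nn2 : 0 ≤ (∫ x in u..(1:ℝ), p.eval x) := by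
      apply intervalIntegral.integral_nonneg hu2
      intro t ht
      exact hpos t ⟨le_trans hu1 ht.1, ht.2⟩
    constructor
    · linarith [e1 ▸ nn1]
    · rw [e1] at nn1
      rw [e2] at nn2
      rw [e3] at hint
      linarith
  set Q : Polynomial ℝ := P.comp (C c₀ + C s₀ * X) - C (P.eval (-1)) with hQdef
  have hQdeg : Q.natDegree ≤ d + 1 := by
    rw [hQdef, natDegree_sub_C]
    apply le_trans natDegree_comp_le
    have hlin : (C c₀ + C s₀ * X).natDegree ≤ 1 := by
      apply le_trans (natDegree_add_le _ _)
      simp only [natDegree_C]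
      apply max_le (by omega)
      apply le_trans (natDegree_mul_le)
      simp
    have hPd : P.natDegree ≤ d + 1 := by
      rw [hP]
      exact le_trans (natDegree_antider_le p) (by omega)
    calc P.natDegree * (C c₀ + C s₀ * X).natDegree ≤ (d+1) * 1 := by
          apply Nat.mul_le_mul <;> omega
      _ = d + 1 := by omega
  have hmap : ∀ t ∈ Set.Icc (-1:ℝ) 1, c₀ + s₀ * t ∈ Set.Icc (-1:ℝ) 1 := by
    intro t ht
    obtain ⟨ht1, ht2⟩ := ht
    constructor
    · rw [hc₀def, hs₀def]; nlinarith
    · rw [hc₀def, hs₀def]; nlinarith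
  have hQeval : ∀ t : ℝ, Q.eval t = P.eval (c₀ + s₀ * t) - P.eval (-1) := by
    intro t
    rw [hQdef]
    simp [eval_comp]
  have h0 : ∀ t ∈ Set.Icc (-1:ℝ) 1, 0 ≤ Q.eval t := by
    intro t ht
    rw [hQeval]
    exact (hIcc _ (hmap t ht)).1
  have h1 : ∀ t ∈ Set.Icc (-1:ℝ) 1, Q.eval t ≤ α := by
    intro t ht
    rw [hQeval]
    exact (hIcc _ (hmap t ht)).2
  have hend := endpoint (n := d+1) (by omega) hQdeg h0 h1
  have hDQ : eval 1 (derivative Q) = s₀ * p.eval x₀ := by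
    rw [hQdef, derivative_sub, derivative_C, sub_zero, derivative_comp]
    have hd1 : derivative (C c₀ + C s₀ * X) = C s₀ := by
      rw [derivative_add, derivative_C, derivative_C_mul, derivative_X, zero_add, mul_one]
    rw [hd1, deriv_antider]
    simp only [eval_mul, eval_C, eval_comp, eval_add, eval_X, eval_one]
    congr 2
    rw [hc₀def, hs₀def]; ring
  rw [hDQ] at hend
  have hcast : ((d+1:ℕ):ℝ) = (d:ℝ) + 1 := by push_cast; ring
  rw [hcast] at hend
  -- s₀ * p.eval x₀ ≤ (d+1)^2 * α / 2, s₀ = (x₀+1)/2 ≥ 1/2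
  have hs₀half : (1:ℝ)/2 ≤ s₀ := by rw [hs₀def]; linarith
  have hfin : p.eval x₀ ≤ ((d:ℝ)+1)^2 * α := by
    have hnn : (0:ℝ) ≤ ((d:ℝ)+1)^2 * α := by positivity
    nlinarith [hpos x₀ ⟨by linarith, hx₀1⟩]
  linarith [hfin, le_of_eq (mul_comm α (((d:ℝ)+1)^2))]


end Stmt9Proof


/-- Let `α > 0` and let `p` be a real polynomial of degree at most `d` such that `p(x) ≥ 0`
for all `x ∈ [−1,1]` and `∫_{−1}^1 p(x) dx ≤ α`. Then `p(x) ≤ α · (d+1)²` for all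
`x ∈ [−1,1]`. -/
theorem stmt9 (d : ℕ) (α : ℝ) (hα : 0 < α) (p : Polynomial ℝ) (hdeg : p.natDegree ≤ d)
    (hpos : ∀ x ∈ Set.Icc (-1 : ℝ) 1, 0 ≤ p.eval x)
    (hint : (∫ x in (-1 : ℝ)..1, p.eval x) ≤ α) :
    ∀ x ∈ Set.Icc (-1 : ℝ) 1, p.eval x ≤ α * ((d : ℝ) + 1) ^ 2 := by
  intro x hx
  obtain ⟨hx1, hx2⟩ := hx
  rcases le_or_gt 0 x with h | h
  · exact Stmt9Proof.half d α hα p hdeg hpos hint x ⟨h, hx2⟩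
  · set q : Polynomial ℝ := p.comp (-X) with hq
    have hqdeg : q.natDegree ≤ d := by
      rw [hq]
      apply le_trans natDegree_comp_le
      simp only [natDegree_neg, natDegree_X, mul_one]
      exact hdeg
    have hqeval : ∀ y : ℝ, q.eval y = p.eval (-y) := by
      intro y; rw [hq]; simp [eval_comp]
    have hqpos : ∀ y ∈ Set.Icc (-1 : ℝ) 1, 0 ≤ q.eval y := by
      intro y hy
      rw [hqeval]
      exact hpos (-y) ⟨by linarith [hy.2], by linarith [hy.1]⟩
    have hqint : (∫ y in (-1 : ℝ)..1, q.eval y) ≤ α := by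
      have e1 : (∫ y in (-1 : ℝ)..1, q.eval y) = ∫ y in (-1 : ℝ)..1, p.eval (-y) := by
        apply intervalIntegral.integral_congr
        intro y hy
        exact hqeval y
      have e2 := intervalIntegral.integral_comp_neg (a := (-1:ℝ)) (b := (1:ℝ))
        (fun t => p.eval t)
      rw [e1]
      rw [e2]
      norm_num
      exact hint
    have := Stmt9Proof.half d α hα q hqdeg hqpos hqint (-x) ⟨by linarith, by linarith⟩
    rwa [hqeval, neg_neg] at this
end

section
/- Let d, k ∈ ℕ, τ ≥ 0, η > 0, and let μ be a finite Borel measure on [−1,1]. If C_{τ,d,k,μ} is nonempty, then there exists c₀ ∈ ℝ^{d+1} such that the closed Euclidean ball of radius η/(4(d+1)) centered at c₀ is contained in C_{τ+η,d,k,μ}. -/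
open MeasureTheory Set

/-- The `A_k`-distance between a function `g` and a finite Borel measure `μ` on a
subinterval `J`: the supremum over all collections of `k` pairwise disjoint subintervals
`I₁, …, I_k` of `J` of `∑ᵢ |∫_{Iᵢ} g − μ(Iᵢ)|`. -/
noncomputable def akDist (k : ℕ) (J : Set ℝ) (g : ℝ → ℝ) (μ : Measure ℝ) : ℝ :=
  sSup { s : ℝ | ∃ I : Fin k → Set ℝ,
    (∀ i, I i ⊆ J ∧ (I i).OrdConnected) ∧
    (Pairwise fun i j => Disjoint (I i) (I j)) ∧
    s = ∑ i, |(∫ x in I i, g x) - (μ (I i)).toReal| }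

/-- The polynomial `p_c(x) = ∑ᵢ cᵢ xⁱ` associated with a coefficient vector
`c ∈ ℝ^{d+1}`. -/
noncomputable def pc (d : ℕ) (c : Fin (d + 1) → ℝ) (x : ℝ) : ℝ :=
  ∑ i, c i * x ^ (i : ℕ)

/-- The set of `(τ,d,k,μ)`-feasible polynomial coefficient vectors: those `c ∈ ℝ^{d+1}`
with `p_c ≥ 0` on `[−1,1]` and `‖p_c − μ‖_{A_k,[−1,1]} ≤ τ`. -/
def feasibleSet (τ : ℝ) (d k : ℕ) (μ : Measure ℝ) : Set (Fin (d + 1) → ℝ) :=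
  { c | (∀ x ∈ Set.Icc (-1 : ℝ) 1, 0 ≤ pc d c x) ∧
    akDist k (Set.Icc (-1 : ℝ) 1) (pc d c) μ ≤ τ }

lemma pc_cont (d : ℕ) (c : Fin (d + 1) → ℝ) : Continuous (pc d c) := by
  unfold pc
  exact continuous_finset_sum _ fun i _ => (continuous_const.mul (continuous_pow _))

lemma sum_toReal_le {k : ℕ} (ν : Measure ℝ) (I : Fin k → Set ℝ)
    (hm : ∀ i, MeasurableSet (I i)) (hsub : ∀ i, I i ⊆ Icc (-1:ℝ) 1)
    (hd : Pairwise fun i j => Disjoint (I i) (I j))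
    (hν : ν (Icc (-1:ℝ) 1) ≠ ⊤) :
    ∑ i, (ν (I i)).toReal ≤ (ν (Icc (-1:ℝ) 1)).toReal := by
  have hU : ν (⋃ i, I i) ≤ ν (Icc (-1:ℝ) 1) :=
    measure_mono (iUnion_subset hsub)
  have heq : (ν (⋃ i, I i)).toReal = ∑ i, (ν (I i)).toReal := by
    rw [measure_iUnion hd hm, ENNReal.tsum_toReal_eq
      (fun i => ne_top_of_le_ne_top hν (measure_mono (hsub i))), tsum_fintype]
  rw [← heq]
  exact ENNReal.toReal_mono hν hU

lemma sum_setIntegral_le {k : ℕ} (f : ℝ → ℝ) (hf : IntegrableOn f (Icc (-1:ℝ) 1))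
    (hf0 : ∀ x, 0 ≤ f x)
    (I : Fin k → Set ℝ) (hm : ∀ i, MeasurableSet (I i))
    (hsub : ∀ i, I i ⊆ Icc (-1:ℝ) 1)
    (hd : Pairwise fun i j => Disjoint (I i) (I j)) :
    ∑ i, ∫ x in I i, f x ≤ ∫ x in Icc (-1:ℝ) 1, f x := by
  have hUsub : (⋃ i, I i) ⊆ Icc (-1:ℝ) 1 := iUnion_subset hsub
  have hint : IntegrableOn f (⋃ i, I i) := hf.mono_set hUsub
  have heq : ∫ x in ⋃ i, I i, f x = ∑ i, ∫ x in I i, f x := by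
    rw [MeasureTheory.integral_iUnion hm hd hint, tsum_fintype]
  rw [← heq]
  exact setIntegral_mono_set hf (Filter.Eventually.of_forall fun x => hf0 x)
    (HasSubset.Subset.eventuallyLE hUsub)

lemma akDist_bddAbove (k : ℕ) (g : ℝ → ℝ) (hg : Continuous g) (μ : Measure ℝ)
    [IsFiniteMeasure μ] :
    BddAbove { s : ℝ | ∃ I : Fin k → Set ℝ,
      (∀ i, I i ⊆ Icc (-1:ℝ) 1 ∧ (I i).OrdConnected) ∧
      (Pairwise fun i j => Disjoint (I i) (I j)) ∧
      s = ∑ i, |(∫ x in I i, g x) - (μ (I i)).toReal| } := by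
  refine ⟨(∫ x in Icc (-1:ℝ) 1, |g x|) + (μ (Icc (-1:ℝ) 1)).toReal, ?_⟩
  rintro s ⟨I, hIJ, hd, rfl⟩
  have hm : ∀ i, MeasurableSet (I i) := fun i => (hIJ i).2.measurableSet
  have hgint : IntegrableOn g (Icc (-1:ℝ) 1) := hg.integrableOn_Icc
  have habs : IntegrableOn (fun x => |g x|) (Icc (-1:ℝ) 1) := hgint.abs
  have step1 : ∀ i, |(∫ x in I i, g x) - (μ (I i)).toReal|
      ≤ (∫ x in I i, |g x|) + (μ (I i)).toReal := by
    intro i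
    have h1 : |∫ x in I i, g x| ≤ ∫ x in I i, |g x| :=
      by simpa [Real.norm_eq_abs] using MeasureTheory.norm_integral_le_integral_norm (μ := volume.restrict (I i)) (f := g)
    have h2 : (0:ℝ) ≤ (μ (I i)).toReal := ENNReal.toReal_nonneg
    calc |(∫ x in I i, g x) - (μ (I i)).toReal|
        ≤ |∫ x in I i, g x| + |(μ (I i)).toReal| := abs_sub _ _
      _ ≤ (∫ x in I i, |g x|) + (μ (I i)).toReal := by
          rw [abs_of_nonneg h2]; linarith
  calc ∑ i, |(∫ x in I i, g x) - (μ (I i)).toReal|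
      ≤ ∑ i, ((∫ x in I i, |g x|) + (μ (I i)).toReal) :=
        Finset.sum_le_sum fun i _ => step1 i
    _ = (∑ i, ∫ x in I i, |g x|) + ∑ i, (μ (I i)).toReal := Finset.sum_add_distrib
    _ ≤ (∫ x in Icc (-1:ℝ) 1, |g x|) + (μ (Icc (-1:ℝ) 1)).toReal := by
        gcongr
        · exact sum_setIntegral_le _ habs (fun x => abs_nonneg _) I hm
            (fun i => (hIJ i).1) hd
        · exact sum_toReal_le μ I hm (fun i => (hIJ i).1) hd (measure_ne_top μ _)

/-- (Lower radius bound) Let `d, k ∈ ℕ`, `τ ≥ 0`, `η > 0`, and let `μ` be a finite Borel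
measure on `[−1,1]`. If `C_{τ,d,k,μ}` is nonempty, then there exists `c₀ ∈ ℝ^{d+1}` such
that the closed Euclidean ball of radius `η/(4(d+1))` centered at `c₀` is contained in
`C_{τ+η,d,k,μ}`. -/
theorem stmt11 (d k : ℕ) (τ η : ℝ) (hτ : 0 ≤ τ) (hη : 0 < η)
    (μ : Measure ℝ) [IsFiniteMeasure μ]
    (hμc : μ (Set.Icc (-1 : ℝ) 1)ᶜ = 0)
    (hne : (feasibleSet τ d k μ).Nonempty) :
    ∃ c₀ : Fin (d + 1) → ℝ, ∀ c : Fin (d + 1) → ℝ,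
      Real.sqrt (∑ i, (c i - c₀ i) ^ 2) ≤ η / (4 * ((d : ℝ) + 1)) →
      c ∈ feasibleSet (τ + η) d k μ := by
  obtain ⟨cs, hpos, hak⟩ := hne
  set δ : ℝ := η / 4 with hδ
  set c₀ : Fin (d + 1) → ℝ := fun i => cs i + if i = 0 then δ else 0 with hc₀
  have hc₀eq : ∀ x : ℝ, pc d c₀ x = pc d cs x + δ * x ^ (0:ℕ) := by
    intro x
    simp only [pc, hc₀, add_mul, Finset.sum_add_distrib, ite_mul, zero_mul]
    congr 1
    rw [Finset.sum_ite_eq' Finset.univ (0 : Fin (d+1)) (fun i => δ * x ^ (i:ℕ))]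
    simp
  refine ⟨c₀, fun c hc => ?_⟩
  have hd1 : (0:ℝ) < (d:ℝ) + 1 := by positivity
  -- coordinatewise bound
  have key1 : ∀ i, |c i - c₀ i| ≤ η / (4 * ((d : ℝ) + 1)) := by
    intro i
    have h1 : (c i - c₀ i) ^ 2 ≤ ∑ j, (c j - c₀ j) ^ 2 :=
      Finset.single_le_sum (f := fun j => (c j - c₀ j) ^ 2)
        (fun j _ => sq_nonneg _) (Finset.mem_univ i)
    have := Real.sqrt_le_sqrt h1
    rw [Real.sqrt_sq_eq_abs] at this
    exact this.trans hc
  have sum1 : ∑ i, |c i - c₀ i| ≤ η / 4 := by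
    calc ∑ i, |c i - c₀ i| ≤ ∑ _i : Fin (d+1), η / (4 * ((d : ℝ) + 1)) :=
          Finset.sum_le_sum fun i _ => key1 i
      _ = ((d:ℝ) + 1) * (η / (4 * ((d : ℝ) + 1))) := by
          rw [Finset.sum_const, Finset.card_univ, Fintype.card_fin]
          push_cast; ring
      _ = η / 4 := by field_simp
  -- pointwise difference bound
  have hdiff : ∀ x ∈ Icc (-1:ℝ) 1, |pc d c x - pc d c₀ x| ≤ η / 4 := by
    intro x hx
    have hxabs : |x| ≤ 1 := abs_le.2 ⟨hx.1, hx.2⟩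
    have heq : pc d c x - pc d c₀ x = ∑ i, (c i - c₀ i) * x ^ (i:ℕ) := by
      simp [pc, ← Finset.sum_sub_distrib, sub_mul]
    rw [heq]
    calc |∑ i, (c i - c₀ i) * x ^ (i:ℕ)|
        ≤ ∑ i, |(c i - c₀ i) * x ^ (i:ℕ)| := Finset.abs_sum_le_sum_abs _ _
      _ ≤ ∑ i, |c i - c₀ i| := by
          refine Finset.sum_le_sum fun i _ => ?_
          rw [abs_mul, abs_pow]
          calc |c i - c₀ i| * |x| ^ (i:ℕ) ≤ |c i - c₀ i| * 1 := by
                exact mul_le_mul_of_nonneg_left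
                  (pow_le_one₀ (abs_nonneg x) hxabs) (abs_nonneg _)
            _ = |c i - c₀ i| := mul_one _
      _ ≤ η / 4 := sum1
  have hdiff2 : ∀ x ∈ Icc (-1:ℝ) 1, |pc d c x - pc d cs x| ≤ η / 2 := by
    intro x hx
    have h1 := hdiff x hx
    have h2 := hc₀eq x
    simp only [pow_zero, mul_one] at h2
    have := abs_le.1 h1
    rw [abs_le]
    constructor <;> [nlinarith [hη]; nlinarith [hη]]
  constructor
  · -- nonnegativity
    intro x hx
    have h1 := abs_le.1 (hdiff x hx)
    have h2 := hc₀eq x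
    simp only [pow_zero, mul_one] at h2
    have h3 := hpos x hx
    nlinarith
  · -- akDist bound
    unfold akDist
    apply Real.sSup_le _ (by linarith)
    rintro s ⟨I, hIJ, hdisj, rfl⟩
    have hm : ∀ i, MeasurableSet (I i) := fun i => (hIJ i).2.measurableSet
    have hintc : ∀ i, IntegrableOn (pc d c) (I i) :=
      fun i => ((pc_cont d c).integrableOn_Icc).mono_set (hIJ i).1
    have hints : ∀ i, IntegrableOn (pc d cs) (I i) :=
      fun i => ((pc_cont d cs).integrableOn_Icc).mono_set (hIJ i).1
    have hintd : ∀ i, IntegrableOn (fun x => |pc d c x - pc d cs x|) (I i) :=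
      fun i => ((hintc i).sub (hints i)).abs
    have hIfin : ∀ i, volume (I i) ≠ ⊤ := fun i =>
      ne_top_of_le_ne_top (by rw [Real.volume_Icc]; exact ENNReal.ofReal_ne_top)
        (measure_mono (hIJ i).1)
    have step1 : ∀ i, |(∫ x in I i, pc d c x) - (μ (I i)).toReal|
        ≤ |(∫ x in I i, pc d cs x) - (μ (I i)).toReal|
          + ∫ x in I i, |pc d c x - pc d cs x| := by
      intro i
      have h1 : (∫ x in I i, pc d c x) - (∫ x in I i, pc d cs x)
          = ∫ x in I i, (pc d c x - pc d cs x) :=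
        (integral_sub (hintc i) (hints i)).symm
      have h2 : |∫ x in I i, (pc d c x - pc d cs x)|
          ≤ ∫ x in I i, |pc d c x - pc d cs x| :=
        by simpa [Real.norm_eq_abs] using MeasureTheory.norm_integral_le_integral_norm (μ := volume.restrict (I i)) (f := fun x => pc d c x - pc d cs x)
      have h3 : |(∫ x in I i, pc d c x) - (∫ x in I i, pc d cs x)|
          ≤ ∫ x in I i, |pc d c x - pc d cs x| := by rw [h1]; exact h2
      have := abs_sub_abs_le_abs_sub ((∫ x in I i, pc d c x) - (μ (I i)).toReal)
        ((∫ x in I i, pc d cs x) - (μ (I i)).toReal)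
      have h4 := abs_le.1 h3
      have h5 := abs_sub_le ((∫ x in I i, pc d c x)) ((∫ x in I i, pc d cs x))
        ((μ (I i)).toReal)
      calc |(∫ x in I i, pc d c x) - (μ (I i)).toReal|
          ≤ |(∫ x in I i, pc d c x) - (∫ x in I i, pc d cs x)|
            + |(∫ x in I i, pc d cs x) - (μ (I i)).toReal| := h5
        _ ≤ (∫ x in I i, |pc d c x - pc d cs x|)
            + |(∫ x in I i, pc d cs x) - (μ (I i)).toReal| := by linarith
        _ = _ := by ring
    have step2 : ∑ i, |(∫ x in I i, pc d cs x) - (μ (I i)).toReal| ≤ τ := by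
      refine le_trans (le_csSup (akDist_bddAbove k (pc d cs) (pc_cont d cs) μ)
        ⟨I, hIJ, hdisj, rfl⟩) ?_
      exact hak
    have step3 : ∑ i, ∫ x in I i, |pc d c x - pc d cs x| ≤ η := by
      have each : ∀ i, (∫ x in I i, |pc d c x - pc d cs x|)
          ≤ (volume (I i)).toReal * (η / 2) := by
        intro i
        have hconst : IntegrableOn (fun _ : ℝ => η / 2) (I i) :=
          integrableOn_const (hIfin i)
        calc (∫ x in I i, |pc d c x - pc d cs x|)
            ≤ ∫ _x in I i, (η / 2) := by
              refine setIntegral_mono_on (hintd i) hconst (hm i) fun x hx => ?_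
              exact hdiff2 x ((hIJ i).1 hx)
          _ = (volume (I i)).toReal * (η / 2) := by
              rw [setIntegral_const]; simp [smul_eq_mul]; exact Or.inl rfl
        done
      calc ∑ i, ∫ x in I i, |pc d c x - pc d cs x|
          ≤ ∑ i, (volume (I i)).toReal * (η / 2) :=
            Finset.sum_le_sum fun i _ => each i
        _ = (∑ i, (volume (I i)).toReal) * (η / 2) := by
            rw [← Finset.sum_mul]
        _ ≤ 2 * (η / 2) := by
            have := sum_toReal_le volume I hm (fun i => (hIJ i).1) hdisj
              (by rw [Real.volume_Icc]; exact ENNReal.ofReal_ne_top)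
            have h2 : (volume (Icc (-1:ℝ) 1)).toReal = 2 := by
              rw [Real.volume_Icc]; norm_num
            rw [h2] at this
            nlinarith [hη]
        _ = η := by ring
    calc ∑ i, |(∫ x in I i, pc d c x) - (μ (I i)).toReal|
        ≤ ∑ i, (|(∫ x in I i, pc d cs x) - (μ (I i)).toReal|
            + ∫ x in I i, |pc d c x - pc d cs x|) :=
          Finset.sum_le_sum fun i _ => step1 i
      _ = (∑ i, |(∫ x in I i, pc d cs x) - (μ (I i)).toReal|)
          + ∑ i, ∫ x in I i, |pc d c x - pc d cs x| := Finset.sum_add_distrib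
      _ ≤ τ + η := add_le_add step2 step3
end

section
/- Let μ = Σ_{ℓ=1}^s w_ℓ δ_{x_ℓ} with −1 ≤ x_1 < x_2 < … < x_s ≤ 1 and w_ℓ > 0, let p be any real polynomial, and let D be the associated alternating sequence of length 2s+1. Then for every positive integer k, ‖p − μ‖_{A_k,[−1,1]} ≥ ‖D‖_{A_k}^{disc}. -/
open MeasureTheory Set

/-- The discrete `A_k`-norm of a finite sequence `a₁, …, a_r`: the supremum over all
collections of at most `k` pairwise disjoint blocks of consecutive indices
`{u, …, v} ⊆ {1, …, r}` of the sum over the collection of `|∑_{i=u}^v aᵢ|`. -/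
noncomputable def akDisc (r k : ℕ) (a : ℕ → ℝ) : ℝ :=
  sSup { s : ℝ | ∃ (m : ℕ) (u v : Fin m → ℕ), m ≤ k ∧
    (∀ j, 1 ≤ u j ∧ u j ≤ v j ∧ v j ≤ r) ∧
    (Pairwise fun j j' => Disjoint (Finset.Icc (u j) (v j)) (Finset.Icc (u j') (v j'))) ∧
    s = ∑ j, |∑ i ∈ Finset.Icc (u j) (v j), a i| }


def blkAux (s : ℕ) (x : ℕ → ℝ) (u v : ℕ) : Set ℝ :=
  (if u % 2 = 0 ∨ u = 1 then Set.Ici (x (u / 2)) else Set.Ioi (x (u / 2))) ∩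
  (if v % 2 = 0 ∨ v = 2 * s + 1 then Set.Iic (x ((v + 1) / 2)) else Set.Iio (x ((v + 1) / 2)))

lemma blkAux_ordConnected (s : ℕ) (x : ℕ → ℝ) (u v : ℕ) : (blkAux s x u v).OrdConnected := by
  unfold blkAux; split_ifs <;>
    exact Set.OrdConnected.inter (by first | exact Set.ordConnected_Ici | exact Set.ordConnected_Ioi)
      (by first | exact Set.ordConnected_Iic | exact Set.ordConnected_Iio)

lemma blkAux_subset (s : ℕ) (x : ℕ → ℝ) (u v : ℕ) :
    blkAux s x u v ⊆ Set.Icc (x (u / 2)) (x ((v + 1) / 2)) := by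
  unfold blkAux; split_ifs <;> intro t ht <;>
    exact ⟨by first | exact ht.1 | exact le_of_lt ht.1, by first | exact ht.2 | exact le_of_lt ht.2⟩

lemma blkAux_measurable (s : ℕ) (x : ℕ → ℝ) (u v : ℕ) : MeasurableSet (blkAux s x u v) := by
  unfold blkAux; split_ifs <;> exact MeasurableSet.inter (by measurability) (by measurability)

lemma blkAux_ae (s : ℕ) (x : ℕ → ℝ) (u v : ℕ) :
    blkAux s x u v =ᵐ[volume] Set.Ioc (x (u / 2)) (x ((v + 1) / 2)) := by
  unfold blkAux; split_ifs
  · rw [Set.Ici_inter_Iic]; exact (Ioc_ae_eq_Icc (μ := volume)).symm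
  · rw [Set.Ici_inter_Iio]; exact (Ico_ae_eq_Icc (μ := volume)).trans (Ioc_ae_eq_Icc (μ := volume)).symm
  · rw [Set.Ioi_inter_Iic]; exact Filter.EventuallyEq.rfl
  · rw [Set.Ioi_inter_Iio]; exact Ioo_ae_eq_Ioc (μ := volume)

lemma blkAux_mem (s : ℕ) (x : ℕ → ℝ)
    (hmle : ∀ a b, a ≤ b → b ≤ s + 1 → x a ≤ x b)
    (hmlt : ∀ a b, 1 ≤ a → a < b → b ≤ s → x a < x b)
    (u v ℓ : ℕ) (hu : 1 ≤ u) (huv : u ≤ v) (hv : v ≤ 2 * s + 1)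
    (hℓ : 1 ≤ ℓ) (hℓs : ℓ ≤ s) :
    x ℓ ∈ blkAux s x u v ↔ (u ≤ 2 * ℓ ∧ 2 * ℓ ≤ v) := by
  have key_le : ∀ a b, 1 ≤ a → a ≤ s → 1 ≤ b → b ≤ s → (x a ≤ x b ↔ a ≤ b) := by
    intro a b ha has hb hbs
    constructor
    · intro h; by_contra hc; push_neg at hc
      exact absurd h (not_le.mpr (hmlt b a hb hc has))
    · intro h; exact hmle a b h (by omega)
  have key_lt : ∀ a b, 1 ≤ a → a ≤ s → 1 ≤ b → b ≤ s → (x a < x b ↔ a < b) := by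
    intro a b ha has hb hbs
    constructor
    · intro h; by_contra hc; push_neg at hc
      exact absurd h (not_lt.mpr (hmle b a hc (by omega)))
    · intro h; exact hmlt a b ha h hbs
  unfold blkAux
  rw [Set.mem_inter_iff]
  apply and_congr
  · split_ifs with h1
    · rcases h1 with h1 | h1
      · rw [Set.mem_Ici, key_le _ _ (by omega) (by omega) hℓ hℓs]; omega
      · have h0 : u / 2 = 0 := by omega
        rw [Set.mem_Ici, h0]
        exact iff_of_true (hmle 0 ℓ (by omega) (by omega)) (by omega)
    · push_neg at h1
      rw [Set.mem_Ioi, key_lt _ _ (by omega) (by omega) hℓ hℓs]; omega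
  · split_ifs with h2
    · rcases h2 with h2 | h2
      · rw [Set.mem_Iic, key_le _ _ hℓ hℓs (by omega) (by omega)]; omega
      · have h0 : (v + 1) / 2 = s + 1 := by omega
        rw [Set.mem_Iic, h0]
        exact iff_of_true (hmle ℓ (s + 1) (by omega) le_rfl) (by omega)
    · push_neg at h2
      rw [Set.mem_Iio, key_lt _ _ hℓ hℓs (by omega) (by omega)]; omega

lemma blkAux_disjoint (s : ℕ) (x : ℕ → ℝ)
    (hmle : ∀ a b, a ≤ b → b ≤ s + 1 → x a ≤ x b)
    (hmlt : ∀ a b, 1 ≤ a → a < b → b ≤ s → x a < x b)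
    (u v u' v' : ℕ) (hu : 1 ≤ u) (huv : u ≤ v) (hv : v ≤ 2 * s + 1)
    (hu' : 1 ≤ u') (huv' : u' ≤ v') (hv' : v' ≤ 2 * s + 1) (h : v < u') :
    Disjoint (blkAux s x u v) (blkAux s x u' v') := by
  rw [Set.disjoint_left]
  intro t ht ht'
  have ht2 := ht.2
  have ht1 := ht'.1
  unfold blkAux at ht2 ht1
  split_ifs at ht2 with h2 <;> split_ifs at ht1 with h3
  · -- both closed
    rcases h2 with h2 | h2
    · rcases h3 with h3 | h3
      · have : x ((v + 1) / 2) < x (u' / 2) := hmlt _ _ (by omega) (by omega) (by omega)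
        rw [Set.mem_Iic] at ht2; rw [Set.mem_Ici] at ht1; linarith
      · omega
    · omega
  · -- v closed, u' open
    rcases h2 with h2 | h2
    · have : x ((v + 1) / 2) ≤ x (u' / 2) := hmle _ _ (by omega) (by omega)
      rw [Set.mem_Iic] at ht2; rw [Set.mem_Ioi] at ht1; linarith
    · omega
  · -- v open, u' closed
    have : x ((v + 1) / 2) ≤ x (u' / 2) := hmle _ _ (by omega) (by omega)
    rw [Set.mem_Iio] at ht2; rw [Set.mem_Ici] at ht1; linarith
  · -- both open
    have : x ((v + 1) / 2) ≤ x (u' / 2) := hmle _ _ (by omega) (by omega)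
    rw [Set.mem_Iio] at ht2; rw [Set.mem_Ioi] at ht1; linarith

lemma blkAux_integral (s : ℕ) (x : ℕ → ℝ) (f : ℝ → ℝ)
    (u v : ℕ) (h : x (u / 2) ≤ x ((v + 1) / 2)) :
    ∫ t in blkAux s x u v, f t = ∫ t in (x (u / 2))..(x ((v + 1) / 2)), f t := by
  rw [setIntegral_congr_set (blkAux_ae s x u v), intervalIntegral.integral_of_le h]

lemma telescope_integral (x : ℕ → ℝ) (f : ℝ → ℝ) (hf : Continuous f) (a b : ℕ) (hab : a ≤ b) :
    ∫ t in (x a)..(x b), f t = ∑ ℓ ∈ Finset.Icc (a + 1) b, ∫ t in (x (ℓ - 1))..(x ℓ), f t := by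
  have key := intervalIntegral.sum_integral_adjacent_intervals
    (a := fun i => x (a + i)) (n := b - a) (f := f) (μ := volume)
    (fun i _ => hf.intervalIntegrable _ _)
  have h1 : a + (b - a) = b := by omega
  rw [h1, Nat.add_zero] at key
  rw [← key]
  refine Finset.sum_nbij' (fun i => a + 1 + i) (fun ℓ => ℓ - (a + 1)) ?_ ?_ ?_ ?_ ?_ <;>
    simp only [Finset.mem_range, Finset.mem_Icc]
  · intro i hi; omega
  · intro ℓ hℓ; omega
  · intro i hi; omega
  · intro ℓ hℓ; omega
  · intro i hi
    have e1 : a + 1 + i - 1 = a + i := by omega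
    have e2 : a + 1 + i = a + (i + 1) := by omega
    rw [e1, e2]

lemma blk_value (s : ℕ) (x w : ℕ → ℝ)
    (hmle : ∀ a b, a ≤ b → b ≤ s + 1 → x a ≤ x b)
    (hmlt : ∀ a b, 1 ≤ a → a < b → b ≤ s → x a < x b)
    (hw : ∀ ℓ ∈ Finset.Icc 1 s, 0 < w ℓ)
    (p : Polynomial ℝ) (D : ℕ → ℝ)
    (hDodd : ∀ ℓ ∈ Finset.Icc 1 (s + 1), D (2 * ℓ - 1) = ∫ t in (x (ℓ - 1))..(x ℓ), p.eval t)
    (hDeven : ∀ ℓ ∈ Finset.Icc 1 s, D (2 * ℓ) = -(w ℓ))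
    (u v : ℕ) (hu : 1 ≤ u) (huv : u ≤ v) (hv : v ≤ 2 * s + 1) :
    (∫ t in blkAux s x u v, p.eval t) -
      ((∑ ℓ ∈ Finset.Icc 1 s, ENNReal.ofReal (w ℓ) • Measure.dirac (x ℓ)) (blkAux s x u v)).toReal
      = ∑ i ∈ Finset.Icc u v, D i := by
  classical
  have hint : (∫ t in blkAux s x u v, p.eval t)
      = ∑ ℓ ∈ Finset.Icc (u / 2 + 1) ((v + 1) / 2), D (2 * ℓ - 1) := by
    rw [blkAux_integral s x _ u v (hmle _ _ (by omega) (by omega)),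
        telescope_integral x _ p.continuous _ _ (by omega)]
    apply Finset.sum_congr rfl
    intro ℓ hℓ
    rw [Finset.mem_Icc] at hℓ
    rw [hDodd ℓ (Finset.mem_Icc.mpr ⟨by omega, by omega⟩)]
  have hmeas : ((∑ ℓ ∈ Finset.Icc 1 s, ENNReal.ofReal (w ℓ) • Measure.dirac (x ℓ))
        (blkAux s x u v)).toReal
      = ∑ ℓ ∈ (Finset.Icc 1 s).filter (fun ℓ => u ≤ 2 * ℓ ∧ 2 * ℓ ≤ v), w ℓ := by
    rw [Measure.coe_finset_sum, Finset.sum_apply]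
    have step : ∀ ℓ ∈ Finset.Icc 1 s,
        (ENNReal.ofReal (w ℓ) • Measure.dirac (x ℓ)) (blkAux s x u v)
          = if u ≤ 2 * ℓ ∧ 2 * ℓ ≤ v then ENNReal.ofReal (w ℓ) else 0 := by
      intro ℓ hℓ
      rw [Finset.mem_Icc] at hℓ
      rw [Measure.smul_apply, smul_eq_mul, Measure.dirac_apply, Set.indicator_apply]
      by_cases hmem : u ≤ 2 * ℓ ∧ 2 * ℓ ≤ v
      · rw [if_pos ((blkAux_mem s x hmle hmlt u v ℓ hu huv hv hℓ.1 hℓ.2).mpr hmem),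
          if_pos hmem, Pi.one_apply, mul_one]
      · rw [if_neg (fun hc => hmem ((blkAux_mem s x hmle hmlt u v ℓ hu huv hv hℓ.1 hℓ.2).mp hc)),
          if_neg hmem, mul_zero]
    rw [Finset.sum_congr rfl step, ← Finset.sum_filter, ENNReal.toReal_sum]
    · apply Finset.sum_congr rfl
      intro ℓ hℓ
      exact ENNReal.toReal_ofReal (le_of_lt (hw ℓ (Finset.mem_filter.mp hℓ).1))
    · intro ℓ _; exact ENNReal.ofReal_ne_top
  have hsplit : ∑ i ∈ Finset.Icc u v, D i
      = ∑ i ∈ (Finset.Icc u v).filter (fun i => i % 2 = 1), D i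
        + ∑ i ∈ (Finset.Icc u v).filter (fun i => ¬ i % 2 = 1), D i :=
    (Finset.sum_filter_add_sum_filter_not _ _ _).symm
  have hodd : ∑ i ∈ (Finset.Icc u v).filter (fun i => i % 2 = 1), D i
      = ∑ ℓ ∈ Finset.Icc (u / 2 + 1) ((v + 1) / 2), D (2 * ℓ - 1) := by
    refine Finset.sum_nbij' (fun i => (i + 1) / 2) (fun ℓ => 2 * ℓ - 1) ?_ ?_ ?_ ?_ ?_ <;>
      simp only [Finset.mem_filter, Finset.mem_Icc]
    · intro i hi; omega
    · intro ℓ hℓ; omega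
    · intro i hi; omega
    · intro ℓ hℓ; omega
    · intro i hi; congr 1; omega
  have heven : ∑ i ∈ (Finset.Icc u v).filter (fun i => ¬ i % 2 = 1), D i
      = ∑ ℓ ∈ (Finset.Icc 1 s).filter (fun ℓ => u ≤ 2 * ℓ ∧ 2 * ℓ ≤ v), D (2 * ℓ) := by
    refine Finset.sum_nbij' (fun i => i / 2) (fun ℓ => 2 * ℓ) ?_ ?_ ?_ ?_ ?_ <;>
      simp only [Finset.mem_filter, Finset.mem_Icc]
    · intro i hi; omega
    · intro ℓ hℓ; omega
    · intro i hi; omega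
    · intro ℓ hℓ; omega
    · intro i hi; congr 1; omega
  have hneg : ∑ ℓ ∈ (Finset.Icc 1 s).filter (fun ℓ => u ≤ 2 * ℓ ∧ 2 * ℓ ≤ v), D (2 * ℓ)
      = - ∑ ℓ ∈ (Finset.Icc 1 s).filter (fun ℓ => u ≤ 2 * ℓ ∧ 2 * ℓ ≤ v), w ℓ := by
    rw [← Finset.sum_neg_distrib]
    apply Finset.sum_congr rfl
    intro ℓ hℓ
    exact hDeven ℓ (Finset.mem_filter.mp hℓ).1
  rw [hint, hmeas, hsplit, hodd, heven, hneg]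
  ring

/-- Let `μ = ∑_{ℓ=1}^s w_ℓ δ_{x_ℓ}` with `−1 ≤ x₁ < … < x_s ≤ 1` and `w_ℓ > 0`, let `p` be
any real polynomial, and let `D` be the associated alternating sequence of length `2s+1`
(with `D(2ℓ−1) = ∫_{x_{ℓ−1}}^{x_ℓ} p` for `ℓ = 1, …, s+1`, where `x₀ = −1`, `x_{s+1} = 1`,
and `D(2ℓ) = −w_ℓ` for `ℓ = 1, …, s`). Then for every positive integer `k`,
`‖p − μ‖_{A_k,[−1,1]} ≥ ‖D‖_{A_k}^{disc}`. -/
theorem stmt12 (s : ℕ) (hs : 0 < s) (x : ℕ → ℝ) (w : ℕ → ℝ)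
    (hx0 : x 0 = -1) (hxtop : x (s + 1) = 1)
    (hx1 : -1 ≤ x 1) (hxs : x s ≤ 1)
    (hmono : ∀ ℓ, 1 ≤ ℓ → ℓ < s → x ℓ < x (ℓ + 1))
    (hw : ∀ ℓ ∈ Finset.Icc 1 s, 0 < w ℓ)
    (p : Polynomial ℝ) (D : ℕ → ℝ)
    (hDodd : ∀ ℓ ∈ Finset.Icc 1 (s + 1),
      D (2 * ℓ - 1) = ∫ t in (x (ℓ - 1))..(x ℓ), p.eval t)
    (hDeven : ∀ ℓ ∈ Finset.Icc 1 s, D (2 * ℓ) = -(w ℓ))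
    (k : ℕ) (hk : 0 < k) :
    akDisc (2 * s + 1) k D ≤
      akDist k (Set.Icc (-1 : ℝ) 1) (fun t => p.eval t)
        (∑ ℓ ∈ Finset.Icc 1 s, ENNReal.ofReal (w ℓ) • Measure.dirac (x ℓ)) := by
  classical
  set μ : Measure ℝ := ∑ ℓ ∈ Finset.Icc 1 s, ENNReal.ofReal (w ℓ) • Measure.dirac (x ℓ)
    with hμdef
  -- monotonicity helpers
  have hchain : ∀ a b, 1 ≤ a → a ≤ b → b ≤ s → x a ≤ x b := by
    intro a b ha hab hbs
    induction b with
    | zero => omega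
    | succ n ih =>
      rcases Nat.eq_or_lt_of_le hab with h | h
      · rw [h]
      · have h1 : x a ≤ x n := ih (by omega) (by omega)
        have h2 : x n < x (n + 1) := hmono n (by omega) (by omega)
        linarith
  have hx_lt : ∀ a b, 1 ≤ a → a < b → b ≤ s → x a < x b := by
    intro a b ha hab hbs
    have h1 : x a ≤ x (b - 1) := hchain a (b - 1) ha (by omega) (by omega)
    have h2 : x (b - 1) < x b := by
      have := hmono (b - 1) (by omega) (by omega)
      have e : b - 1 + 1 = b := by omega
      rwa [e] at this
    linarith
  have hx_le : ∀ a b, a ≤ b → b ≤ s + 1 → x a ≤ x b := by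
    intro a b hab hb
    rcases Nat.eq_or_lt_of_le hab with h | h
    · rw [h]
    by_cases ha0 : a = 0
    · subst ha0
      rw [hx0]
      by_cases hb1 : b = s + 1
      · rw [hb1, hxtop]; norm_num
      · calc (-1 : ℝ) ≤ x 1 := hx1
          _ ≤ x b := hchain 1 b le_rfl (by omega) (by omega)
    · by_cases hbtop : b = s + 1
      · subst hbtop
        calc x a ≤ x s := hchain a s (by omega) (by omega) le_rfl
          _ ≤ 1 := hxs
          _ = x (s + 1) := hxtop.symm
      · exact hchain a b (by omega) hab (by omega)
  -- finiteness of μ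
  have hμfin : μ Set.univ ≠ ⊤ := by
    rw [hμdef, Measure.coe_finset_sum, Finset.sum_apply]
    refine (ENNReal.sum_lt_top.mpr ?_).ne
    intro ℓ _
    rw [Measure.smul_apply, smul_eq_mul]
    exact ENNReal.mul_lt_top ENNReal.ofReal_lt_top (by simp)
  -- the bound
  set C₁ : ℝ := ∫ t in Set.Icc (-1 : ℝ) 1, |p.eval t| with hC₁def
  set C₂ : ℝ := (μ Set.univ).toReal with hC₂def
  have hC₁pos : 0 ≤ C₁ := setIntegral_nonneg measurableSet_Icc (fun t _ => abs_nonneg _)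
  have hC₂pos : 0 ≤ C₂ := ENNReal.toReal_nonneg
  have hintabs : IntegrableOn (fun t => |p.eval t|) (Set.Icc (-1 : ℝ) 1) volume :=
    (p.continuous.abs).integrableOn_Icc
  have hterm : ∀ (A : Set ℝ), A ⊆ Set.Icc (-1 : ℝ) 1 → A.OrdConnected →
      |(∫ t in A, p.eval t) - (μ A).toReal| ≤ C₁ + C₂ := by
    intro A hA hAoc
    have h1 : |∫ t in A, p.eval t| ≤ C₁ := by
      calc |∫ t in A, p.eval t| ≤ ∫ t in A, |p.eval t| := by
            simpa using norm_integral_le_integral_norm (μ := volume.restrict A)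
              (f := fun t => p.eval t)
          _ ≤ C₁ := setIntegral_mono_set hintabs
              (Filter.Eventually.of_forall fun t => abs_nonneg _)
              (HasSubset.Subset.eventuallyLE hA)
    have h2 : (μ A).toReal ≤ C₂ := by
      exact ENNReal.toReal_mono hμfin (measure_mono (Set.subset_univ A))
    calc |(∫ t in A, p.eval t) - (μ A).toReal| ≤ |∫ t in A, p.eval t| + |(μ A).toReal| :=
          abs_sub _ _
      _ ≤ C₁ + C₂ := by
          rw [abs_of_nonneg ENNReal.toReal_nonneg]
          exact add_le_add h1 h2
  -- bounded above
  have hbdd : BddAbove { r : ℝ | ∃ I : Fin k → Set ℝ,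
      (∀ i, I i ⊆ Set.Icc (-1 : ℝ) 1 ∧ (I i).OrdConnected) ∧
      (Pairwise fun i j => Disjoint (I i) (I j)) ∧
      r = ∑ i, |(∫ t in I i, p.eval t) - (μ (I i)).toReal| } := by
    refine ⟨k * (C₁ + C₂), ?_⟩
    rintro r ⟨I, hI, -, rfl⟩
    calc ∑ i, |(∫ t in I i, p.eval t) - (μ (I i)).toReal|
        ≤ ∑ _i : Fin k, (C₁ + C₂) :=
          Finset.sum_le_sum fun i _ => hterm (I i) (hI i).1 (hI i).2
      _ = k * (C₁ + C₂) := by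
          rw [Finset.sum_const, Finset.card_univ, Fintype.card_fin, nsmul_eq_mul]
  -- akDist is nonnegative
  have hzero : (0 : ℝ) ∈ { r : ℝ | ∃ I : Fin k → Set ℝ,
      (∀ i, I i ⊆ Set.Icc (-1 : ℝ) 1 ∧ (I i).OrdConnected) ∧
      (Pairwise fun i j => Disjoint (I i) (I j)) ∧
      r = ∑ i, |(∫ t in I i, p.eval t) - (μ (I i)).toReal| } := by
    refine ⟨fun _ => ∅, fun i => ⟨Set.empty_subset _, Set.ordConnected_empty⟩,
      fun i j _ => Set.disjoint_empty ∅, ?_⟩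
    simp
  have hnn : 0 ≤ akDist k (Set.Icc (-1 : ℝ) 1) (fun t => p.eval t) μ :=
    le_csSup hbdd hzero
  rw [akDisc]
  refine Real.sSup_le ?_ hnn
  rintro r ⟨m, u, v, hm, hbounds, hdisj, rfl⟩
  rw [akDist]
  apply le_csSup hbdd
  set I : Fin k → Set ℝ :=
    fun i => if h : (i : ℕ) < m then blkAux s x (u ⟨i, h⟩) (v ⟨i, h⟩) else ∅ with hIdef
  refine ⟨I, ?_, ?_, ?_⟩
  · intro i
    by_cases h : (i : ℕ) < m
    · obtain ⟨hb1, hb2, hb3⟩ := hbounds ⟨i, h⟩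
      simp only [hIdef]
      rw [dif_pos h]
      refine ⟨?_, blkAux_ordConnected _ _ _ _⟩
      refine (blkAux_subset s x _ _).trans (Set.Icc_subset_Icc ?_ ?_)
      · rw [← hx0]; exact hx_le 0 _ (by omega) (by omega)
      · rw [← hxtop]; exact hx_le _ (s + 1) (by omega) le_rfl
    · simp only [hIdef]
      rw [dif_neg h]
      exact ⟨Set.empty_subset _, Set.ordConnected_empty⟩
  · intro i j hij
    by_cases hi : (i : ℕ) < m
    · by_cases hj : (j : ℕ) < m
      · simp only [hIdef]
        rw [dif_pos hi, dif_pos hj]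
        obtain ⟨hb1, hb2, hb3⟩ := hbounds ⟨i, hi⟩
        obtain ⟨hb1', hb2', hb3'⟩ := hbounds ⟨j, hj⟩
        have hne : (⟨(i : ℕ), hi⟩ : Fin m) ≠ ⟨(j : ℕ), hj⟩ := by
          simp only [ne_eq, Fin.mk.injEq]
          exact fun hc => hij (Fin.ext hc)
        have hd : Disjoint (Finset.Icc (u ⟨(i : ℕ), hi⟩) (v ⟨(i : ℕ), hi⟩))
            (Finset.Icc (u ⟨(j : ℕ), hj⟩) (v ⟨(j : ℕ), hj⟩)) := hdisj hne
        rw [Finset.disjoint_left] at hd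
        have hsep : v ⟨(i : ℕ), hi⟩ < u ⟨(j : ℕ), hj⟩ ∨ v ⟨(j : ℕ), hj⟩ < u ⟨(i : ℕ), hi⟩ := by
          by_contra hc
          push_neg at hc
          exact hd (a := max (u ⟨(i : ℕ), hi⟩) (u ⟨(j : ℕ), hj⟩))
            (Finset.mem_Icc.mpr (by omega)) (Finset.mem_Icc.mpr (by omega))
        rcases hsep with hsep | hsep
        · exact blkAux_disjoint s x hx_le hx_lt _ _ _ _ hb1 hb2 hb3 hb1' hb2' hb3' hsep
        · exact (blkAux_disjoint s x hx_le hx_lt _ _ _ _ hb1' hb2' hb3' hb1 hb2 hb3 hsep).symm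
      · simp only [hIdef]; rw [dif_neg hj]; exact Set.disjoint_empty _
    · simp only [hIdef]; rw [dif_neg hi]; exact (Set.disjoint_empty _).symm
  · set G : ℕ → ℝ :=
      fun n => if h : n < m then |∑ i ∈ Finset.Icc (u ⟨n, h⟩) (v ⟨n, h⟩), D i| else 0 with hGdef
    have hFG : ∀ i : Fin k, |(∫ t in I i, p.eval t) - (μ (I i)).toReal| = G (i : ℕ) := by
      intro i
      by_cases h : (i : ℕ) < m
      · obtain ⟨hb1, hb2, hb3⟩ := hbounds ⟨i, h⟩
        simp only [hIdef, hGdef]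
        rw [dif_pos h, dif_pos h, hμdef,
          blk_value s x w hx_le hx_lt hw p D hDodd hDeven _ _ hb1 hb2 hb3]
      · simp only [hIdef, hGdef]
        rw [dif_neg h, dif_neg h]
        simp
    calc ∑ j : Fin m, |∑ i ∈ Finset.Icc (u j) (v j), D i|
        = ∑ n ∈ Finset.range m, G n := by
          rw [← Fin.sum_univ_eq_sum_range]
          refine Finset.sum_congr rfl fun j _ => ?_
          simp only [hGdef]
          rw [dif_pos j.isLt]
      _ = ∑ n ∈ Finset.range k, G n := by
          apply Finset.sum_subset (Finset.range_subset_range.mpr hm)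
          intro n _ hn
          simp only [hGdef]
          rw [dif_neg (by simpa using hn)]
      _ = ∑ i : Fin k, G (i : ℕ) := (Fin.sum_univ_eq_sum_range G k).symm
      _ = ∑ i : Fin k, |(∫ t in I i, p.eval t) - (μ (I i)).toReal| :=
          Finset.sum_congr rfl fun i _ => (hFG i).symm
end
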